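/- arXiv:1712.09854 — 4 statements merged into one kernel-verified Lean document; each statement's English description precedes it below -/
import Mathlib

section
/- Let $X=(X_t)_{t\in[0,T]}$ and $Y=(Y_t)_{t\in[0,T]}$ be mutually independent $d$-dimensional continuous processes. If $X$ has conditional full support with respect to its natural filtration $\mathbb{F}^X$, then the sum $X+Y$ has conditional full support with respect to its natural filtration $\mathbb{F}^{X+Y}$. -/
open MeasureTheory ProbabilityTheory Set
noncomputable section
variable {Ω : Type*}

/-- The small-ball event: the path of `X` on `[t₀,T]` stays `ε`-close to `X t₀ + f`. -/
def sbEvent {E : Type*} [NormedAddCommGroup E] (X : ℝ → Ω → E) (t₀ T ε : ℝ) (f : ℝ → E) : Set Ω :=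
  {ω | ∀ t ∈ Set.Icc t₀ T, ‖X t ω - X t₀ ω - f t‖ < ε}

/-- Conditional full support (conditional small ball property) of the process `X` on `[0,T]`
with respect to the filtration `F`. -/
def HasCFS {E : Type*} [NormedAddCommGroup E] [m0 : MeasurableSpace Ω] (μ : Measure Ω) (T : ℝ)
    (F : ℝ → MeasurableSpace Ω) (X : ℝ → Ω → E) : Prop :=
  ∀ t₀ ∈ Set.Ico (0:ℝ) T, ∀ f : ℝ → E, ContinuousOn f (Set.Icc t₀ T) → f t₀ = 0 →
    ∀ ε > 0, ∀ᵐ ω ∂μ,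
      0 < (μ[(sbEvent X t₀ T ε f).indicator (fun _ => (1:ℝ)) | F t₀]) ω

/-- The natural filtration of a process. -/
def natFilt {E : Type*} [MeasurableSpace E] [MeasurableSpace Ω] (X : ℝ → Ω → E) (t : ℝ) :
    MeasurableSpace Ω := ⨆ s ∈ Set.Iic t, MeasurableSpace.comap (X s) inferInstance

/-- The usual augmentation of a filtration: smallest right-continuous complete enlargement. -/
def usualAug [MeasurableSpace Ω] (μ : Measure Ω) (F : ℝ → MeasurableSpace Ω) (t : ℝ) :
    MeasurableSpace Ω :=
  ⨅ s ∈ Set.Ioi t, (F s ⊔ MeasurableSpace.generateFrom {N : Set Ω | μ N = 0})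

/-- The σ-algebra generated by a whole process. -/
def processSigma {E : Type*} [MeasurableSpace E] [MeasurableSpace Ω] (X : ℝ → Ω → E) :
    MeasurableSpace Ω := ⨆ t : ℝ, MeasurableSpace.comap (X t) inferInstance

/-! ### Auxiliary lemmas -/

lemma measurableSet_sbEvent {d : ℕ} {m : MeasurableSpace Ω}
    {X : ℝ → Ω → EuclideanSpace ℝ (Fin d)} (hX : ∀ t, Measurable[m] (X t))
    {t₀ T : ℝ} (hle : t₀ ≤ T) (hcont : ∀ ω, Continuous fun t => X t ω)
    {f : ℝ → EuclideanSpace ℝ (Fin d)} (hf : ContinuousOn f (Icc t₀ T)) (ε : ℝ) :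
    MeasurableSet[m] (sbEvent X t₀ T ε f) := by
  haveI : Nonempty (Icc t₀ T) := Set.Nonempty.to_subtype (nonempty_Icc.mpr hle)
  set u : ℕ → Icc t₀ T := TopologicalSpace.denseSeq (Icc t₀ T) with hu_def
  have hu : DenseRange u := TopologicalSpace.denseRange_denseSeq _
  have key : sbEvent X t₀ T ε f =
      ⋃ n : ℕ, ⋂ k : ℕ, {ω | ‖X (u k : ℝ) ω - X t₀ ω - f (u k : ℝ)‖ ≤ ε - 1 / (n + 1)} := by
    ext ω
    have hg : ContinuousOn (fun t => X t ω - X t₀ ω - f t) (Icc t₀ T) :=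
      (((hcont ω).sub continuous_const).continuousOn).sub hf
    constructor
    · intro hω
      obtain ⟨tm, htm, hmax⟩ := isCompact_Icc.exists_isMaxOn (nonempty_Icc.mpr hle)
        (continuous_norm.comp_continuousOn hg)
      have hlt : ‖X tm ω - X t₀ ω - f tm‖ < ε := hω tm htm
      obtain ⟨n, hn⟩ := exists_nat_one_div_lt (sub_pos.mpr hlt)
      refine mem_iUnion.mpr ⟨n, mem_iInter.mpr fun k => ?_⟩
      have h2 : ‖X (u k : ℝ) ω - X t₀ ω - f (u k : ℝ)‖ ≤ ‖X tm ω - X t₀ ω - f tm‖ :=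
        hmax (u k).2
      have h1 : (1 : ℝ) / (n + 1) < ε - ‖X tm ω - X t₀ ω - f tm‖ := hn
      simp only [mem_setOf_eq]
      linarith
    · intro hω
      obtain ⟨n, hn⟩ := mem_iUnion.mp hω
      have hk : ∀ k : ℕ, ‖X (u k : ℝ) ω - X t₀ ω - f (u k : ℝ)‖ ≤ ε - 1 / (n + 1) :=
        fun k => mem_iInter.mp hn k
      intro t ht
      have hcε : ε - 1 / ((n:ℝ) + 1) < ε := by
        have : (0:ℝ) < 1 / ((n:ℝ)+1) := by positivity
        linarith
      set c : ℝ := ε - 1 / ((n:ℝ) + 1) with hc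
      have hclosed : IsClosed {x : Icc t₀ T | ‖X (x:ℝ) ω - X t₀ ω - f (x:ℝ)‖ ≤ c} := by
        have hcont' : Continuous fun x : Icc t₀ T => ‖X (x:ℝ) ω - X t₀ ω - f (x:ℝ)‖ :=
          (hg.restrict).norm
        exact isClosed_le hcont' continuous_const
      have hsub : range u ⊆ {x : Icc t₀ T | ‖X (x:ℝ) ω - X t₀ ω - f (x:ℝ)‖ ≤ c} := by
        rintro _ ⟨k, rfl⟩; exact hk k
      have hall : ∀ x : Icc t₀ T, ‖X (x:ℝ) ω - X t₀ ω - f (x:ℝ)‖ ≤ c := by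
        intro x
        have hx : x ∈ closure (range u) := hu x
        exact hclosed.closure_subset (closure_mono hsub hx)
      exact lt_of_le_of_lt (hall ⟨t, ht⟩) hcε
  rw [key]
  exact MeasurableSet.iUnion fun n => MeasurableSet.iInter fun k =>
    measurableSet_le (((hX _).sub (hX t₀)).sub measurable_const).norm measurable_const

/-- set integral of an indicator of `S` over `A` is `μ (A ∩ S)`. -/
lemma setIntegral_indicator_one {m0 : MeasurableSpace Ω} {μ : Measure Ω} [IsProbabilityMeasure μ]
    {S A : Set Ω} (hS : MeasurableSet[m0] S) :
    ∫ ω in A, S.indicator (fun _ => (1:ℝ)) ω ∂μ = (μ (A ∩ S)).toReal := by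
  rw [setIntegral_indicator hS, setIntegral_const, smul_eq_mul, mul_one, measureReal_def]

lemma pos_condexp_of_sets {F : MeasurableSpace Ω} {m0 : MeasurableSpace Ω} {μ : Measure Ω}
    [IsProbabilityMeasure μ] (hF : F ≤ m0) {S : Set Ω} (hS : MeasurableSet[m0] S)
    (h : ∀ A : Set Ω, MeasurableSet[F] A → 0 < μ A → 0 < μ (A ∩ S)) :
    ∀ᵐ ω ∂μ, 0 < (μ[S.indicator (fun _ => (1:ℝ)) | F]) ω := by
  set φ : Ω → ℝ := μ[S.indicator (fun _ => (1:ℝ)) | F] with hφ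
  have hAmeas : MeasurableSet[F] {ω | φ ω ≤ 0} :=
    measurableSet_le stronglyMeasurable_condExp.measurable measurable_const
  have hA0 : μ {ω | φ ω ≤ 0} = 0 := by
    by_contra h0
    have hpos : 0 < μ {ω | φ ω ≤ 0} := pos_iff_ne_zero.mpr h0
    have hposS := h _ hAmeas hpos
    have hint : Integrable (S.indicator (fun _ => (1:ℝ))) μ := by
      refine Integrable.indicator ?_ hS; exact integrable_const 1
    have heq : ∫ ω in {ω | φ ω ≤ 0}, φ ω ∂μ = (μ ({ω | φ ω ≤ 0} ∩ S)).toReal := by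
      rw [hφ, setIntegral_condExp hF hint hAmeas, setIntegral_indicator_one hS]
    have hle : ∫ ω in {ω | φ ω ≤ 0}, φ ω ∂μ ≤ 0 := by
      refine setIntegral_nonpos (hF _ hAmeas) (fun ω hω => hω)
    have : (0:ℝ) < (μ ({ω | φ ω ≤ 0} ∩ S)).toReal :=
      ENNReal.toReal_pos hposS.ne' (measure_ne_top μ _)
    linarith [heq ▸ hle]
  have : ∀ᵐ ω ∂μ, ¬ φ ω ≤ 0 := by
    rw [ae_iff]; simpa using hA0
  filter_upwards [this] with ω hω
  exact lt_of_not_ge hω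

lemma setIntegral_pos_of_ae_pos {m0 : MeasurableSpace Ω} {μ : Measure Ω}
    {φ : Ω → ℝ} (hpos : ∀ᵐ ω ∂μ, 0 < φ ω) (hint : Integrable φ μ)
    {D : Set Ω} (hμD : 0 < μ D) :
    0 < ∫ ω in D, φ ω ∂μ := by
  rw [setIntegral_pos_iff_support_of_nonneg_ae
    (ae_restrict_of_ae (hpos.mono fun ω h => le_of_lt h)) hint.integrableOn]
  have hnull : μ (Function.support φ)ᶜ = 0 := by
    have h0 : μ {ω | ¬ 0 < φ ω} = 0 := by rw [← ae_iff]; exact hpos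
    refine measure_mono_null (fun ω hω => ?_) h0
    simp only [mem_compl_iff, Function.mem_support, not_not] at hω
    simp [hω]
  have hle : μ D ≤ μ (Function.support φ ∩ D) := by
    calc μ D ≤ μ (D ∩ Function.support φ) + μ (D \ Function.support φ) :=
          measure_le_inter_add_diff μ D _
      _ ≤ μ (D ∩ Function.support φ) + μ (Function.support φ)ᶜ :=
          add_le_add le_rfl (measure_mono fun ω hω => hω.2)
      _ = μ (Function.support φ ∩ D) := by rw [hnull, add_zero, inter_comm]
  exact lt_of_lt_of_le hμD hle

lemma key_identity {F mX mY : MeasurableSpace Ω} {m0 : MeasurableSpace Ω} {μ : Measure Ω}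
    [IsProbabilityMeasure μ] (hF : F ≤ mX) (hmX : mX ≤ m0) (hmY : mY ≤ m0)
    (hindep : Indep mX mY μ) {S : Set Ω} (hS : MeasurableSet[mX] S) :
    ∀ D : Set Ω, MeasurableSet[F ⊔ mY] D →
      (μ (D ∩ S)).toReal = ∫ ω in D, (μ[S.indicator (fun _ => (1:ℝ)) | F]) ω ∂μ := by
  have hFm0 : F ≤ m0 := hF.trans hmX
  have hSm0 : MeasurableSet[m0] S := hmX _ hS
  set φ : Ω → ℝ := μ[S.indicator (fun _ => (1:ℝ)) | F] with hφ
  have hint : Integrable (S.indicator (fun _ => (1:ℝ))) μ := by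
    refine Integrable.indicator ?_ hSm0; exact integrable_const 1
  have hφint : Integrable φ μ := integrable_condExp
  have hφmeasF : Measurable[F] φ := stronglyMeasurable_condExp.measurable
  set P : Set (Set Ω) := {D | ∃ B C : Set Ω, MeasurableSet[F] B ∧ MeasurableSet[mY] C ∧
      D = B ∩ C} with hP
  have h_eq : F ⊔ mY = MeasurableSpace.generateFrom P := by
    refine le_antisymm (sup_le ?_ ?_) (MeasurableSpace.generateFrom_le ?_)
    · intro s hs
      exact MeasurableSpace.measurableSet_generateFrom
        ⟨s, univ, hs, MeasurableSet.univ, (inter_univ s).symm⟩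
    · intro s hs
      exact MeasurableSpace.measurableSet_generateFrom
        ⟨univ, s, MeasurableSet.univ, hs, (univ_inter s).symm⟩
    · rintro _ ⟨B, C, hB, hC, rfl⟩
      exact (le_sup_left (b := mY) _ hB).inter (le_sup_right (a := F) _ hC)
  have h_inter : IsPiSystem P := by
    rintro _ ⟨B₁, C₁, hB₁, hC₁, rfl⟩ _ ⟨B₂, C₂, hB₂, hC₂, rfl⟩ _
    exact ⟨B₁ ∩ B₂, C₁ ∩ C₂, hB₁.inter hB₂, hC₁.inter hC₂, by
      rw [inter_inter_inter_comm]⟩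
  have hprod := (Indep_iff mX mY μ).mp hindep
  have hBint : ∀ B : Set Ω, MeasurableSet[F] B → ∫ ω in B, φ ω ∂μ = (μ (B ∩ S)).toReal := by
    intro B hB
    rw [hφ, setIntegral_condExp hFm0 hint hB, setIntegral_indicator_one hSm0]
  refine @MeasurableSpace.induction_on_inter Ω (F ⊔ mY)
    (fun D _ => (μ (D ∩ S)).toReal = ∫ ω in D, φ ω ∂μ) P h_eq h_inter ?_ ?_ ?_ ?_
  · simp
  · rintro _ ⟨B, C, hB, hC, rfl⟩
    have hBm0 : MeasurableSet[m0] B := hFm0 _ hB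
    have hCm0 : MeasurableSet[m0] C := hmY _ hC
    have hL : μ (B ∩ C ∩ S) = μ (B ∩ S) * μ C := by
      rw [inter_right_comm]
      exact hprod _ _ ((hF _ hB).inter hS) hC
    have hfg : (B ∩ C).indicator φ = fun ω => C.indicator (fun _ => (1:ℝ)) ω * B.indicator φ ω := by
      funext ω
      rw [← Set.inter_indicator_mul, inter_comm C B]
      simp [Set.indicator_apply]
    have hIndepFun : IndepFun (C.indicator (fun _ => (1:ℝ))) (B.indicator φ) μ := by
      rw [IndepFun_iff_Indep]
      have h1 : MeasurableSpace.comap (C.indicator (fun _ => (1:ℝ))) inferInstance ≤ mY :=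
        measurable_iff_comap_le.mp (measurable_const.indicator hC)
      have h2 : MeasurableSpace.comap (B.indicator φ) inferInstance ≤ mX :=
        measurable_iff_comap_le.mp ((hφmeasF.indicator hB).mono hF le_rfl)
      rw [Indep_iff]
      intro t1 t2 ht1 ht2
      rw [inter_comm, hprod t2 t1 (h2 _ ht2) (h1 _ ht1), mul_comm]
    have hint1 : Integrable (C.indicator (fun _ => (1:ℝ))) μ := by
      refine Integrable.indicator ?_ hCm0; exact integrable_const 1
    have hint2 : Integrable (B.indicator φ) μ := hφint.indicator hBm0
    have hR : ∫ ω in B ∩ C, φ ω ∂μ =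
        (∫ ω, C.indicator (fun _ => (1:ℝ)) ω ∂μ) * ∫ ω, B.indicator φ ω ∂μ := by
      rw [← integral_indicator (hBm0.inter hCm0), hfg]
      exact IndepFun.integral_fun_mul_eq_mul_integral hIndepFun hint1.aestronglyMeasurable hint2.aestronglyMeasurable
    have h1 : ∫ ω, C.indicator (fun _ => (1:ℝ)) ω ∂μ = (μ C).toReal := by
      rw [integral_indicator hCm0, setIntegral_const, smul_eq_mul, mul_one, measureReal_def]
    have h2 : ∫ ω, B.indicator φ ω ∂μ = (μ (B ∩ S)).toReal := by
      rw [integral_indicator hBm0]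
      exact hBint B hB
    rw [hR, h1, h2, hL, ENNReal.toReal_mul, mul_comm]
  · intro t ht hC
    have htm0 : MeasurableSet[m0] t := (sup_le hFm0 hmY) _ ht
    have hsplit := measure_inter_add_diff (μ := μ) S htm0
    have hsplit' : (μ (S ∩ t)).toReal + (μ (S \ t)).toReal = (μ S).toReal := by
      rw [← ENNReal.toReal_add (measure_ne_top μ _) (measure_ne_top μ _), hsplit]
    have htotal : ∫ ω, φ ω ∂μ = (μ S).toReal := by
      rw [hφ, integral_condExp hFm0, ← measureReal_def, ← integral_indicator_one hSm0]
      rfl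
    have hcompl : ∫ ω in tᶜ, φ ω ∂μ = ∫ ω, φ ω ∂μ - ∫ ω in t, φ ω ∂μ := by
      have := integral_add_compl htm0 hφint
      linarith
    have he1 : tᶜ ∩ S = S \ t := by rw [diff_eq, inter_comm]
    have he2 : t ∩ S = S ∩ t := inter_comm t S
    rw [he1, hcompl, htotal, ← hC, he2]
    linarith
  · intro g hdisj hgm hC
    have hgm0 : ∀ i, MeasurableSet[m0] (g i) := fun i => (sup_le hFm0 hmY) _ (hgm i)
    have hL : (μ ((⋃ i, g i) ∩ S)).toReal = ∑' i, (μ (g i ∩ S)).toReal := by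
      rw [iUnion_inter, measure_iUnion
        (hdisj.mono fun i j h => h.mono inter_subset_left inter_subset_left)
        (fun i => (hgm0 i).inter hSm0),
        ENNReal.tsum_toReal_eq (fun i => measure_ne_top μ _)]
    have hR : ∫ ω in ⋃ i, g i, φ ω ∂μ = ∑' i, ∫ ω in g i, φ ω ∂μ :=
      integral_iUnion hgm0 hdisj hφint.integrableOn
    rw [hL, hR]
    exact tsum_congr fun i => hC i

lemma exists_cover (d : ℕ) {t₀ T : ℝ} (hle : t₀ ≤ T) {ε : ℝ} (hε : 0 < ε) :
    ∃ g : ℕ → ℝ → EuclideanSpace ℝ (Fin d), (∀ n, Continuous (g n)) ∧ (∀ n, g n t₀ = 0) ∧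
      ∀ p : ℝ → EuclideanSpace ℝ (Fin d), Continuous p →
        ∃ n, ∀ t ∈ Icc t₀ T, ‖p t - p t₀ - g n t‖ < ε := by
  haveI : Nonempty (Icc t₀ T) := Set.Nonempty.to_subtype (nonempty_Icc.mpr hle)
  obtain ⟨D, hDc, hDd⟩ := TopologicalSpace.exists_countable_dense
    C(Icc t₀ T, EuclideanSpace ℝ (Fin d))
  have hne : D.Nonempty := hDd.nonempty
  obtain ⟨u, hu⟩ := hDc.exists_eq_range hne
  refine ⟨fun n t => IccExtend hle (u n) t - IccExtend hle (u n) t₀, ?_, ?_, ?_⟩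
  · exact fun n => ((u n).continuous.Icc_extend').sub continuous_const
  · exact fun n => sub_self _
  · intro p hp
    set q : C(Icc t₀ T, EuclideanSpace ℝ (Fin d)) :=
      ⟨fun x => p x, hp.comp continuous_subtype_val⟩ with hq
    have hq3 : ∃ y ∈ D, dist q y < ε / 3 :=
      Metric.mem_closure_iff.mp (by rw [hDd.closure_eq]; exact mem_univ q) (ε / 3)
        (by positivity)
    obtain ⟨y, hyD, hy⟩ := hq3
    obtain ⟨n, rfl⟩ : ∃ n, u n = y := by
      have : y ∈ range u := hu ▸ hyD
      exact this
    refine ⟨n, fun t ht => ?_⟩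
    have h1 : ∀ x : Icc t₀ T, ‖p x - u n x‖ ≤ dist q (u n) := by
      intro x
      have := ContinuousMap.dist_apply_le_dist (f := q) (g := u n) x
      rwa [dist_eq_norm] at this
    have e1 : IccExtend hle (u n) t = u n ⟨t, ht⟩ := IccExtend_of_mem hle (u n) ht
    have e2 : IccExtend hle (u n) t₀ = u n ⟨t₀, left_mem_Icc.mpr hle⟩ :=
      IccExtend_of_mem hle (u n) (left_mem_Icc.mpr hle)
    show ‖p t - p t₀ - (IccExtend hle (u n) t - IccExtend hle (u n) t₀)‖ < ε
    rw [e1, e2]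
    have harith : p t - p t₀ - (u n ⟨t, ht⟩ - u n ⟨t₀, left_mem_Icc.mpr hle⟩) =
        (p t - u n ⟨t, ht⟩) - (p t₀ - u n ⟨t₀, left_mem_Icc.mpr hle⟩) := by abel
    rw [harith]
    calc ‖(p t - u n ⟨t, ht⟩) - (p t₀ - u n ⟨t₀, left_mem_Icc.mpr hle⟩)‖
        ≤ ‖p t - u n ⟨t, ht⟩‖ + ‖p t₀ - u n ⟨t₀, left_mem_Icc.mpr hle⟩‖ := norm_sub_le _ _
      _ ≤ dist q (u n) + dist q (u n) := add_le_add (h1 ⟨t, ht⟩) (h1 ⟨t₀, left_mem_Icc.mpr hle⟩)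
      _ < ε / 3 + ε / 3 := by linarith
      _ < ε := by linarith

/-- if X has CFS with respect to its natural filtration and Y is an
independent continuous process, then X + Y has CFS with respect to its natural filtration. -/
theorem cfs_add_independent
    {m0 : MeasurableSpace Ω} (μ : Measure Ω) [IsProbabilityMeasure μ]
    (T : ℝ) (hT : 0 < T) (d : ℕ)
    (X Y : ℝ → Ω → EuclideanSpace ℝ (Fin d))
    (hXcont : ∀ ω, Continuous fun t => X t ω)
    (hYcont : ∀ ω, Continuous fun t => Y t ω)
    (hXmeas : ∀ t : ℝ, Measurable (X t))
    (hYmeas : ∀ t : ℝ, Measurable (Y t))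
    (hindep : ProbabilityTheory.Indep (processSigma X) (processSigma Y) μ)
    (hCFS : HasCFS μ T (natFilt X) X) :
    HasCFS μ T (natFilt (fun t ω => X t ω + Y t ω)) (fun t ω => X t ω + Y t ω) := by
  intro t₀ ht₀ f hf hf0 ε hε
  set Z : ℝ → Ω → EuclideanSpace ℝ (Fin d) := fun t ω => X t ω + Y t ω with hZ
  have hle : t₀ ≤ T := le_of_lt ht₀.2
  have hZmeas : ∀ t, Measurable (Z t) := fun t => (hXmeas t).add (hYmeas t)
  have hZcont : ∀ ω, Continuous fun t => Z t ω := fun ω => (hXcont ω).add (hYcont ω)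
  have hmX : processSigma X ≤ m0 := iSup_le fun t => measurable_iff_comap_le.mp (hXmeas t)
  have hmY : processSigma Y ≤ m0 := iSup_le fun t => measurable_iff_comap_le.mp (hYmeas t)
  have hFX_le : natFilt X t₀ ≤ processSigma X :=
    iSup₂_le fun s _ => le_iSup (fun t => MeasurableSpace.comap (X t) inferInstance) s
  have hXmX : ∀ t, Measurable[processSigma X] (X t) := fun t =>
    measurable_iff_comap_le.mpr (le_iSup (fun t => MeasurableSpace.comap (X t) inferInstance) t)
  have hYmY : ∀ t, Measurable[processSigma Y] (Y t) := fun t =>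
    measurable_iff_comap_le.mpr (le_iSup (fun t => MeasurableSpace.comap (Y t) inferInstance) t)
  have hFZ_le_m0 : natFilt Z t₀ ≤ m0 :=
    iSup₂_le fun s _ => measurable_iff_comap_le.mp (hZmeas s)
  have hFZ_le : natFilt Z t₀ ≤ natFilt X t₀ ⊔ processSigma Y := by
    refine iSup₂_le fun s hs => measurable_iff_comap_le.mp ?_
    have hXs : Measurable[natFilt X t₀ ⊔ processSigma Y] (X s) :=
      measurable_iff_comap_le.mpr (le_trans
        (le_iSup₂ (f := fun s' (_ : s' ∈ Iic t₀) => MeasurableSpace.comap (X s') inferInstance)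
          s hs) le_sup_left)
    have hYs : Measurable[natFilt X t₀ ⊔ processSigma Y] (Y s) :=
      measurable_iff_comap_le.mpr (le_trans
        (le_iSup (fun t => MeasurableSpace.comap (Y t) inferInstance) s) le_sup_right)
    exact hXs.add hYs
  have hS : MeasurableSet (sbEvent Z t₀ T ε f) := measurableSet_sbEvent hZmeas hle hZcont hf ε
  refine pos_condexp_of_sets hFZ_le_m0 hS ?_
  intro A hA hApos
  obtain ⟨g, hgc, hg0, hgcover⟩ := exists_cover d hle (half_pos hε)
  have hcover : (⋃ n, sbEvent Y t₀ T (ε/2) (g n)) = univ := by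
    refine eq_univ_of_forall fun ω => mem_iUnion.mpr ?_
    obtain ⟨n, hn⟩ := hgcover (fun t => Y t ω) (hYcont ω)
    exact ⟨n, hn⟩
  have hCmeasY : ∀ n, MeasurableSet[processSigma Y] (sbEvent Y t₀ T (ε/2) (g n)) := fun n =>
    measurableSet_sbEvent hYmY hle hYcont (hgc n).continuousOn (ε/2)
  obtain ⟨n, hn⟩ : ∃ n, 0 < μ (A ∩ sbEvent Y t₀ T (ε/2) (g n)) := by
    by_contra hcon
    push_neg at hcon
    have hz : ∀ n, μ (A ∩ sbEvent Y t₀ T (ε/2) (g n)) = 0 :=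
      fun n => le_antisymm (hcon n) bot_le
    have hA0 : μ A = 0 := by
      have hcup : A = ⋃ n, A ∩ sbEvent Y t₀ T (ε/2) (g n) := by
        rw [← inter_iUnion, hcover, inter_univ]
      rw [hcup]
      exact le_antisymm ((measure_iUnion_le _).trans (by simp [hz])) bot_le
    exact absurd hA0 hApos.ne'
  set C := sbEvent Y t₀ T (ε/2) (g n) with hC
  set SX := sbEvent X t₀ T (ε/2) (fun t => f t - g n t) with hSXdef
  have hSXmX : MeasurableSet[processSigma X] SX :=
    measurableSet_sbEvent hXmX hle hXcont (hf.sub (hgc n).continuousOn) (ε/2)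
  have hφpos := hCFS t₀ ht₀ (fun t => f t - g n t) (hf.sub (hgc n).continuousOn)
    (by simp [hf0, hg0 n]) (ε/2) (half_pos hε)
  have hD : MeasurableSet[natFilt X t₀ ⊔ processSigma Y] (A ∩ C) :=
    (hFZ_le _ hA).inter (le_sup_right (a := natFilt X t₀) _ (hCmeasY n))
  have hkey := key_identity hFX_le hmX hmY hindep hSXmX (A ∩ C) hD
  have hpos : 0 < ∫ ω in A ∩ C, (μ[SX.indicator (fun _ => (1:ℝ)) | natFilt X t₀]) ω ∂μ :=
    setIntegral_pos_of_ae_pos hφpos integrable_condExp hn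
  have hμpos : 0 < μ (A ∩ C ∩ SX) := by
    have h2 : 0 < (μ (A ∩ C ∩ SX)).toReal := by rw [hkey]; exact hpos
    exact pos_iff_ne_zero.mpr (fun h0 => by simp [h0] at h2)
  refine lt_of_lt_of_le hμpos (measure_mono ?_)
  rintro ω ⟨⟨hωA, hωC⟩, hωS⟩
  refine ⟨hωA, fun t ht => ?_⟩
  have h1 := hωS t ht
  have h2 := hωC t ht
  show ‖Z t ω - Z t₀ ω - f t‖ < ε
  have harith : Z t ω - Z t₀ ω - f t =
      (X t ω - X t₀ ω - (f t - g n t)) + (Y t ω - Y t₀ ω - g n t) := by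
    simp only [hZ]; abel
  rw [harith]
  calc ‖(X t ω - X t₀ ω - (f t - g n t)) + (Y t ω - Y t₀ ω - g n t)‖
      ≤ ‖X t ω - X t₀ ω - (f t - g n t)‖ + ‖Y t ω - Y t₀ ω - g n t‖ := norm_add_le _ _
    _ < ε/2 + ε/2 := add_lt_add h1 h2
    _ = ε := by ring
end
end

section
/- Let $X=(X_t)_{t\in[0,T]}$ be a $d$-dimensional càdlàg $\mathbb{F}$-adapted process that is sticky, and let $f:\mathbb{R}^d\to\mathbb{R}^d$ be a continuous function. Then the process $Y_t=f(X_t)$, $t\in[0,T]$, is also sticky with respect to $\mathbb{F}$. -/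
open MeasureTheory ProbabilityTheory Set
open scoped NNReal ENNReal
noncomputable section
variable {Ω : Type*}

/-- A d-dimensional process is sticky w.r.t. the filtration F. -/
def Sticky {d : ℕ} [MeasurableSpace Ω] (μ : Measure Ω) (T : ℝ) (F : ℝ → MeasurableSpace Ω)
    (X : ℝ → Ω → EuclideanSpace ℝ (Fin d)) : Prop :=
  ∀ t ∈ Set.Ico (0:ℝ) T, ∀ δ > (0:ℝ), ∀ᵐ ω ∂μ,
    0 < (μ[({ω' | ∀ i, ∀ u ∈ Set.Icc t T, |X u ω' i - X t ω' i| < δ}).indicator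
          (fun _ => (1:ℝ)) | F t]) ω

namespace StickyAux

variable {Ω : Type*}

/-- The "projection" set we must show to be null-measurable. -/
def projH (a b : ℝ) (I : ℕ → ℕ → Set ℝ) (E : ℕ → ℕ → Set Ω) : Set Ω :=
  {ω | ∃ u ∈ Set.Icc a b, ∀ n, ∃ j, u ∈ I n j ∧ ω ∈ E n j}

/-- Partially truncated version. -/
def projS (a b : ℝ) (I : ℕ → ℕ → Set ℝ) (E : ℕ → ℕ → Set Ω) (φ : ℕ → ℕ) (N : ℕ) : Set Ω :=
  {ω | ∃ u ∈ Set.Icc a b, ∀ n, ∃ j, (n < N → j < φ n) ∧ u ∈ I n j ∧ ω ∈ E n j}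

/-- Truncated version with constraints only below `N`. -/
def projG (a b : ℝ) (I : ℕ → ℕ → Set ℝ) (E : ℕ → ℕ → Set Ω) (φ : ℕ → ℕ) (N : ℕ) : Set Ω :=
  {ω | ∃ u ∈ Set.Icc a b, ∀ n, n < N → ∃ j, j < φ n ∧ u ∈ I n j ∧ ω ∈ E n j}

variable {a b : ℝ} {I : ℕ → ℕ → Set ℝ} {E : ℕ → ℕ → Set Ω}

lemma projS_zero (φ : ℕ → ℕ) : projS a b I E φ 0 = projH a b I E := by
  ext ω
  simp only [projS, projH, mem_setOf_eq]
  refine ⟨fun ⟨u, hu, h⟩ => ⟨u, hu, fun n => ?_⟩, fun ⟨u, hu, h⟩ => ⟨u, hu, fun n => ?_⟩⟩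
  · obtain ⟨j, _, hj⟩ := h n; exact ⟨j, hj⟩
  · obtain ⟨j, hj⟩ := h n; exact ⟨j, fun hn => absurd hn (Nat.not_lt_zero n), hj⟩

lemma projS_congr {φ ψ : ℕ → ℕ} {N : ℕ} (h : ∀ n < N, φ n = ψ n) :
    projS a b I E φ N = projS a b I E ψ N := by
  ext ω
  simp only [projS, mem_setOf_eq]
  constructor <;> rintro ⟨u, hu, hall⟩ <;> refine ⟨u, hu, fun n => ?_⟩
  · obtain ⟨j, hj1, hj2⟩ := hall n
    exact ⟨j, fun hn => (h n hn) ▸ hj1 hn, hj2⟩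
  · obtain ⟨j, hj1, hj2⟩ := hall n
    exact ⟨j, fun hn => (h n hn).symm ▸ hj1 hn, hj2⟩

lemma projS_subset_projG (φ : ℕ → ℕ) (N : ℕ) :
    projS a b I E φ N ⊆ projG a b I E φ N := by
  rintro ω ⟨u, hu, hall⟩
  refine ⟨u, hu, fun n hn => ?_⟩
  obtain ⟨j, hj1, hj2⟩ := hall n
  exact ⟨j, hj1 hn, hj2⟩

lemma projG_antitone (φ : ℕ → ℕ) : ∀ N, projG a b I E φ (N + 1) ⊆ projG a b I E φ N := by
  rintro N ω ⟨u, hu, hall⟩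
  exact ⟨u, hu, fun n hn => hall n (hn.trans (Nat.lt_succ_self N))⟩

lemma measurableSet_projG {m0 : MeasurableSpace Ω} (hE : ∀ n j, MeasurableSet (E n j))
    (φ : ℕ → ℕ) (N : ℕ) : MeasurableSet (projG a b I E φ N) := by
  have : projG a b I E φ N =
      ⋃ (c : Fin N → ℕ) (_ : (∀ n : Fin N, c n < φ n) ∧
        (Set.Icc a b ∩ ⋂ n : Fin N, I n (c n)).Nonempty), ⋂ n : Fin N, E n (c n) := by
    ext ω
    simp only [projG, mem_setOf_eq, mem_iUnion, mem_iInter]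
    constructor
    · rintro ⟨u, hu, hall⟩
      have hch : ∀ n : Fin N, ∃ j, j < φ n ∧ u ∈ I n j ∧ ω ∈ E n j :=
        fun n => hall n n.isLt
      choose c hc1 hc2 hc3 using hch
      exact ⟨c, ⟨hc1, ⟨u, hu, by exact mem_iInter.2 hc2⟩⟩, hc3⟩
    · rintro ⟨c, ⟨hc1, u, hu⟩, hE'⟩
      refine ⟨u, hu.1, fun n hn => ?_⟩
      have hu2 := mem_iInter.1 hu.2
      exact ⟨c ⟨n, hn⟩, hc1 ⟨n, hn⟩, hu2 ⟨n, hn⟩, hE' ⟨n, hn⟩⟩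
  rw [this]
  exact MeasurableSet.iUnion fun c => MeasurableSet.iUnion fun _ =>
    MeasurableSet.iInter fun n => hE n (c n)

lemma iInter_projG_subset_projH (hI : ∀ n j, IsClosed (I n j)) (φ : ℕ → ℕ) :
    (⋂ N, projG a b I E φ N) ⊆ projH a b I E := by
  intro ω hω
  simp only [mem_iInter] at hω
  -- the compact decreasing sets
  set C : ℕ → Set ℝ := fun N =>
    Set.Icc a b ∩ ⋂ n : Fin N, (⋃ (j : ℕ) (_ : j < φ n ∧ ω ∈ E n j), I n j) with hC
  have hclosed : ∀ N, IsClosed (C N) := by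
    intro N
    refine isClosed_Icc.inter (isClosed_iInter fun n => ?_)
    have : (⋃ (j : ℕ) (_ : j < φ (n : ℕ) ∧ ω ∈ E n j), I (n : ℕ) j) =
        ⋃ j ∈ {j : ℕ | j < φ (n : ℕ) ∧ ω ∈ E n j}, I (n : ℕ) j := rfl
    rw [this]
    refine Set.Finite.isClosed_biUnion ?_ fun j _ => hI n j
    exact (Set.finite_Iio (φ (n:ℕ))).subset fun j hj => hj.1
  have hne : ∀ N, (C N).Nonempty := by
    intro N
    obtain ⟨u, hu, hall⟩ := hω N
    refine ⟨u, hu, mem_iInter.2 fun n => ?_⟩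
    obtain ⟨j, hj1, hj2, hj3⟩ := hall n n.isLt
    exact mem_iUnion.2 ⟨j, mem_iUnion.2 ⟨⟨hj1, hj3⟩, hj2⟩⟩
  have hdec : ∀ N, C (N + 1) ⊆ C N := by
    intro N u hu
    refine ⟨hu.1, mem_iInter.2 fun n => ?_⟩
    exact mem_iInter.1 hu.2 ⟨n, n.isLt.trans (Nat.lt_succ_self N)⟩
  have hcomp : IsCompact (C 0) :=
    isCompact_Icc.of_isClosed_subset (hclosed 0) inter_subset_left
  obtain ⟨u, hu⟩ :=
    IsCompact.nonempty_iInter_of_sequence_nonempty_isCompact_isClosed C hdec hne hcomp hclosed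
  have hu' := mem_iInter.1 hu
  have huIcc : u ∈ Set.Icc a b := (hu' 0).1
  refine ⟨u, huIcc, fun n => ?_⟩
  have := mem_iInter.1 (hu' (n + 1)).2 ⟨n, Nat.lt_succ_self n⟩
  obtain ⟨j, hj⟩ := mem_iUnion.1 this
  obtain ⟨⟨_, hj2⟩, hj3⟩ := mem_iUnion.1 hj
  exact ⟨j, hj3, hj2⟩

lemma projS_iUnion_update (φ : ℕ → ℕ) (N : ℕ) :
    projS a b I E φ N = ⋃ k, projS a b I E (Function.update φ N k) (N + 1) := by
  ext ω
  simp only [mem_iUnion, projS, mem_setOf_eq]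
  constructor
  · rintro ⟨u, hu, hall⟩
    obtain ⟨jN, _, hjN⟩ := hall N
    refine ⟨jN + 1, u, hu, fun n => ?_⟩
    obtain ⟨j, hj1, hj2⟩ := hall n
    rcases Nat.lt_or_ge n N with hn | hn
    · refine ⟨j, fun _ => ?_, hj2⟩
      rw [Function.update_of_ne hn.ne]
      exact hj1 hn
    · rcases Nat.eq_or_lt_of_le hn with hn' | hn'
      · subst hn'
        refine ⟨jN, fun _ => ?_, hjN⟩
        rw [Function.update_self]
        exact Nat.lt_succ_self jN
      · exact ⟨j, fun h => absurd h (Nat.not_lt_of_ge hn'), hj2⟩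
  · rintro ⟨k, u, hu, hall⟩
    refine ⟨u, hu, fun n => ?_⟩
    obtain ⟨j, hj1, hj2⟩ := hall n
    refine ⟨j, fun hn => ?_, hj2⟩
    have := hj1 (hn.trans (Nat.lt_succ_self N))
    rwa [Function.update_of_ne hn.ne] at this

lemma projS_update_mono (φ : ℕ → ℕ) (N : ℕ) :
    Monotone fun k => projS a b I E (Function.update φ N k) (N + 1) := by
  intro k k' hk ω
  rintro ⟨u, hu, hall⟩
  refine ⟨u, hu, fun n => ?_⟩
  obtain ⟨j, hj1, hj2⟩ := hall n
  refine ⟨j, fun hn => ?_, hj2⟩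
  have := hj1 hn
  rcases eq_or_ne n N with rfl | hne
  · rw [Function.update_self] at this ⊢
    exact this.trans_le hk
  · rwa [Function.update_of_ne hne] at this ⊢


open ENNReal

lemma sum_inv_two_pow_le (N : ℕ) :
    ∑ m ∈ Finset.range N, (2 : ℝ≥0∞)⁻¹ ^ (m + 1) ≤ 1 := by
  have key : ∀ N, ∑ m ∈ Finset.range N, (2 : ℝ≥0∞)⁻¹ ^ (m + 1) + (2 : ℝ≥0∞)⁻¹ ^ N = 1 := by
    intro N
    induction N with
    | zero => simp
    | succ N ih =>
      rw [Finset.sum_range_succ, add_assoc]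
      have : (2 : ℝ≥0∞)⁻¹ ^ (N + 1) + (2 : ℝ≥0∞)⁻¹ ^ (N + 1) = (2 : ℝ≥0∞)⁻¹ ^ N := by
        rw [← two_mul, pow_succ, ← mul_assoc]
        have h2 : (2 : ℝ≥0∞) * (2 : ℝ≥0∞)⁻¹ ^ N * (2 : ℝ≥0∞)⁻¹
            = (2 : ℝ≥0∞)⁻¹ ^ N * ((2 : ℝ≥0∞) * (2 : ℝ≥0∞)⁻¹) := by ring
        rw [h2, ENNReal.mul_inv_cancel (by norm_num) (by norm_num), mul_one]
      rw [this, ih]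
  calc ∑ m ∈ Finset.range N, (2 : ℝ≥0∞)⁻¹ ^ (m + 1)
      ≤ ∑ m ∈ Finset.range N, (2 : ℝ≥0∞)⁻¹ ^ (m + 1) + (2 : ℝ≥0∞)⁻¹ ^ N := le_self_add
    _ = 1 := key N

lemma key_step {m0 : MeasurableSpace Ω} (μ : Measure Ω) [IsFiniteMeasure μ]
    {ε' : ℝ≥0∞} (hε' : ε' ≠ 0) (φ : ℕ → ℕ) (N : ℕ) :
    ∃ k, μ (projS a b I E φ N) ≤
      μ (projS a b I E (Function.update φ N k) (N + 1)) + ε' := by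
  set A := μ (projS a b I E φ N) with hA
  by_cases hle : A ≤ ε'
  · exact ⟨0, hle.trans le_add_self⟩
  · push_neg at hle
    have hA0 : A ≠ 0 := fun h => absurd (h ▸ hle) (by simp)
    have hAtop : A ≠ ⊤ := measure_ne_top μ _
    have hεtop : ε' ≠ ⊤ := ne_top_of_lt hle
    have hsub : A - ε' < A := ENNReal.sub_lt_self hAtop hA0 hε'
    have hμ : A = ⨆ k, μ (projS a b I E (Function.update φ N k) (N + 1)) := by
      rw [hA, projS_iUnion_update (a := a) (b := b) (I := I) (E := E) φ N,
        (projS_update_mono (a := a) (b := b) (I := I) (E := E) φ N).measure_iUnion]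
    have hsub2 : A - ε' < ⨆ k, μ (projS a b I E (Function.update φ N k) (N + 1)) :=
      hsub.trans_le (le_of_eq hμ)
    obtain ⟨k, hk⟩ := lt_iSup_iff.1 hsub2
    exact ⟨k, ((ENNReal.sub_lt_iff_lt_right hεtop hle.le).1 hk).le⟩

lemma nullMeasurableSet_projH {m0 : MeasurableSpace Ω} (μ : Measure Ω) [IsFiniteMeasure μ]
    (hI : ∀ n j, IsClosed (I n j)) (hE : ∀ n j, MeasurableSet (E n j)) :
    NullMeasurableSet (projH a b I E) μ := by
  have main : ∀ ε : ℝ≥0∞, ε ≠ 0 → ∃ G, MeasurableSet G ∧ G ⊆ projH a b I E ∧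
      μ (projH a b I E) ≤ μ G + ε := by
    intro ε hε
    have hεseq : ∀ N : ℕ, (ε * (2 : ℝ≥0∞)⁻¹ ^ (N + 1)) ≠ 0 := fun N =>
      mul_ne_zero hε (pow_ne_zero _ (ENNReal.inv_ne_zero.2 (by norm_num)))
    have key := fun (φ : ℕ → ℕ) (N : ℕ) =>
      key_step (a := a) (b := b) (I := I) (E := E) μ (hεseq N) φ N
    choose K hK using key
    let Φ : ℕ → ℕ → ℕ := fun N => Nat.rec (motive := fun _ => ℕ → ℕ) (fun _ => 0)
      (fun M φM => Function.update φM M (K φM M)) N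
    have hΦsucc : ∀ N, Φ (N + 1) = Function.update (Φ N) N (K (Φ N) N) := fun N => rfl
    have hstab : ∀ n M, n + 1 ≤ M → Φ M n = Φ (n + 1) n := by
      intro n
      refine Nat.le_induction rfl ?_
      intro M hM ih
      rw [hΦsucc M, Function.update_of_ne (by omega : n ≠ M), ih]
    set φinf : ℕ → ℕ := fun n => Φ (n + 1) n with hφ
    have hcongS : ∀ N, projS a b I E (Φ N) N = projS a b I E φinf N := fun N =>
      projS_congr fun n hn => hstab n N hn
    have chain : ∀ N, μ (projH a b I E) ≤ μ (projS a b I E (Φ N) N)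
        + ∑ m ∈ Finset.range N, ε * (2 : ℝ≥0∞)⁻¹ ^ (m + 1) := by
      intro N
      induction N with
      | zero => rw [projS_zero]; simp
      | succ N ih =>
        have h := hK (Φ N) N
        rw [← hΦsucc N] at h
        calc μ (projH a b I E)
            ≤ μ (projS a b I E (Φ N) N)
              + ∑ m ∈ Finset.range N, ε * (2 : ℝ≥0∞)⁻¹ ^ (m + 1) := ih
          _ ≤ (μ (projS a b I E (Φ (N + 1)) (N + 1)) + ε * (2 : ℝ≥0∞)⁻¹ ^ (N + 1))
              + ∑ m ∈ Finset.range N, ε * (2 : ℝ≥0∞)⁻¹ ^ (m + 1) := add_le_add_left h _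
          _ = μ (projS a b I E (Φ (N + 1)) (N + 1))
              + ∑ m ∈ Finset.range (N + 1), ε * (2 : ℝ≥0∞)⁻¹ ^ (m + 1) := by
              rw [Finset.sum_range_succ]; ring
    have hsum : ∀ N, ∑ m ∈ Finset.range N, ε * (2 : ℝ≥0∞)⁻¹ ^ (m + 1) ≤ ε := by
      intro N
      rw [← Finset.mul_sum]
      calc ε * ∑ m ∈ Finset.range N, (2 : ℝ≥0∞)⁻¹ ^ (m + 1)
          ≤ ε * 1 := mul_le_mul_right (sum_inv_two_pow_le N) ε
        _ = ε := mul_one ε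
    refine ⟨⋂ N, projG a b I E φinf N,
      MeasurableSet.iInter fun N => measurableSet_projG hE _ _,
      iInter_projG_subset_projH hI φinf, ?_⟩
    have hGanti : Antitone (fun N => projG a b I E φinf N) :=
      antitone_nat_of_succ_le fun N => projG_antitone φinf N
    have hμG : μ (⋂ N, projG a b I E φinf N) = ⨅ N, μ (projG a b I E φinf N) :=
      Directed.measure_iInter (fun N => (measurableSet_projG hE _ _).nullMeasurableSet)
        hGanti.directed_ge ⟨0, measure_ne_top μ _⟩
    have hbound : ∀ N, μ (projH a b I E) ≤ μ (projG a b I E φinf N) + ε := by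
      intro N
      refine (chain N).trans (add_le_add ?_ (hsum N))
      rw [hcongS N]
      exact measure_mono (projS_subset_projG φinf N)
    rw [hμG, ENNReal.iInf_add]
    exact le_iInf hbound
  choose G hGmeas hGsub hGle using
    fun m : ℕ => main (((m : ℝ≥0∞) + 1))⁻¹ (by simp)
  have hG'meas : MeasurableSet (⋃ m, G m) := MeasurableSet.iUnion hGmeas
  have hG'sub : (⋃ m, G m) ⊆ projH a b I E := iUnion_subset hGsub
  have hle : μ (projH a b I E) ≤ μ (⋃ m, G m) := by
    refine ENNReal.le_of_forall_pos_le_add fun ε hε _ => ?_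
    obtain ⟨m, hm⟩ := exists_nat_gt (ε⁻¹ : ℝ≥0)
    have hinv : ((m : ℝ≥0∞) + 1)⁻¹ ≤ (ε : ℝ≥0∞) := by
      rw [← ENNReal.inv_le_iff_inv_le]
      calc (ε : ℝ≥0∞)⁻¹ = ((ε⁻¹ : ℝ≥0) : ℝ≥0∞) := by
            rw [ENNReal.coe_inv hε.ne']
        _ ≤ (m : ℝ≥0∞) := by exact_mod_cast hm.le
        _ ≤ (m : ℝ≥0∞) + 1 := le_self_add
    calc μ (projH a b I E) ≤ μ (G m) + ((m : ℝ≥0∞) + 1)⁻¹ := hGle m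
      _ ≤ μ (⋃ m, G m) + (ε : ℝ≥0∞) :=
          add_le_add (measure_mono (subset_iUnion G m)) hinv
  have hdiff : μ (projH a b I E \ ⋃ m, G m) = 0 := by
    have h1 : μ (projH a b I E \ ⋃ m, G m) ≤ μ (toMeasurable μ (projH a b I E) \ ⋃ m, G m) :=
      measure_mono (diff_subset_diff_left (subset_toMeasurable μ _))
    have h2 : μ (toMeasurable μ (projH a b I E) \ ⋃ m, G m)
        = μ (toMeasurable μ (projH a b I E)) - μ (⋃ m, G m) :=
      measure_diff (hG'sub.trans (subset_toMeasurable μ _)) hG'meas.nullMeasurableSet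
        (measure_ne_top μ _)
    rw [measure_toMeasurable, tsub_eq_zero_of_le hle] at h2
    exact le_antisymm (h1.trans_eq h2) zero_le
  have : projH a b I E = (⋃ m, G m) ∪ (projH a b I E \ ⋃ m, G m) :=
    (union_diff_cancel' (fun x hx => hx) hG'sub).symm
  rw [this]
  exact hG'meas.nullMeasurableSet.union (NullMeasurableSet.of_null hdiff)

lemma attain_eq_projH {t T : ℝ} (g : ℝ → Ω → ℝ)
    (hg : ∀ ω u, ContinuousWithinAt (fun v => g v ω) (Set.Ici u) u)
    (δ : ℝ) (e : ℕ → ℝ)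
    (he : (Set.Icc t T ∩ Set.range ((↑) : ℚ → ℝ)) ∪ {T} = Set.range e) :
    {ω | ∃ u ∈ Set.Icc t T, δ ≤ g u ω} =
      projH t T (fun n j => Set.Icc (e j - 1 / (n + 1)) (e j))
        (fun n j => {ω | δ - 1 / (n + 1) < g (e j) ω}) := by
  have hw : ∀ n : ℕ, (0 : ℝ) < 1 / (n + 1) := fun n => by positivity
  ext ω
  simp only [projH, mem_setOf_eq]
  constructor
  · rintro ⟨u, hu, hδ⟩
    rcases eq_or_lt_of_le hu.2 with huT | huT
    · -- u = T
      have hT : T ∈ Set.range e := by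
        rw [← he]; exact Or.inr rfl
      obtain ⟨j, hj⟩ := hT
      refine ⟨u, hu, fun n => ⟨j, ?_, ?_⟩⟩
      · rw [hj, ← huT]
        exact ⟨by linarith [hw n], le_refl u⟩
      · show δ - 1 / (n + 1) < g (e j) ω
        rw [hj, ← huT]
        linarith [hw n]
    · -- u < T
      refine ⟨u, hu, fun n => ?_⟩
      have hev : ∀ᶠ v in nhdsWithin u (Set.Ici u), δ - 1 / (n + 1) < g v ω :=
        (hg ω u).eventually (eventually_gt_nhds (by linarith [hw n]))
      obtain ⟨ε, hε, hball⟩ := Metric.mem_nhdsWithin_iff.1 hev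
      have hlt : u < min (u + ε) (min (u + 1 / (n + 1)) T) := by
        simp only [lt_min_iff]
        exact ⟨by linarith, by linarith [hw n], huT⟩
      obtain ⟨q, hq1, hq2⟩ := exists_rat_btwn hlt
      simp only [lt_min_iff] at hq2
      have hjq : (q : ℝ) ∈ Set.range e := by
        rw [← he]
        exact Or.inl ⟨⟨hu.1.trans hq1.le, hq2.2.2.le⟩, ⟨q, rfl⟩⟩
      obtain ⟨j, hj⟩ := hjq
      refine ⟨j, ?_, ?_⟩
      · rw [hj]
        exact ⟨by linarith [hq2.2.1], hq1.le⟩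
      · show δ - 1 / (n + 1) < g (e j) ω
        rw [hj]
        refine hball ⟨?_, hq1.le⟩
        rw [Metric.mem_ball, Real.dist_eq, abs_of_pos (by linarith : (0:ℝ) < (q:ℝ) - u)]
        linarith [hq2.1]
  · rintro ⟨u, hu, hall⟩
    choose j hj1 hj2 using hall
    set q : ℕ → ℝ := fun n => e (j n) with hqdef
    have hq1 : ∀ n, u ≤ q n := fun n => (hj1 n).2
    have hq2 : ∀ n, q n ≤ u + 1 / (n + 1) := fun n => by
      have := (hj1 n).1; simp only [hqdef]; linarith
    have hq3 : ∀ n, δ - 1 / (n + 1) < g (q n) ω := fun n => hj2 n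
    have hupper : Filter.Tendsto (fun n : ℕ => u + 1 / (n + 1)) Filter.atTop (nhds u) := by
      have := Filter.Tendsto.const_add u tendsto_one_div_add_atTop_nhds_zero_nat
      rwa [add_zero] at this
    have htq : Filter.Tendsto q Filter.atTop (nhds u) :=
      tendsto_of_tendsto_of_tendsto_of_le_of_le tendsto_const_nhds hupper hq1 hq2
    have htq' : Filter.Tendsto q Filter.atTop (nhdsWithin u (Set.Ici u)) :=
      tendsto_nhdsWithin_of_tendsto_nhds_of_eventually_within q htq
        (Filter.Eventually.of_forall hq1)
    have hgq : Filter.Tendsto (fun n => g (q n) ω) Filter.atTop (nhds (g u ω)) :=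
      (hg ω u).tendsto.comp htq'
    have hδlim : Filter.Tendsto (fun n : ℕ => δ - 1 / (n + 1)) Filter.atTop (nhds δ) := by
      have := Filter.Tendsto.const_sub δ tendsto_one_div_add_atTop_nhds_zero_nat
      rwa [sub_zero] at this
    exact ⟨u, hu, le_of_tendsto_of_tendsto' hδlim hgq fun n => (hq3 n).le⟩

end StickyAux

open StickyAux

/-- stickiness is preserved by a continuous transformation of a càdlàg
adapted process. -/
theorem sticky_comp_continuous
    {m0 : MeasurableSpace Ω} (μ : Measure Ω) [IsProbabilityMeasure μ]
    (T : ℝ) (hT : 0 < T) (d : ℕ)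
    (F : MeasureTheory.Filtration ℝ m0)
    (X : ℝ → Ω → EuclideanSpace ℝ (Fin d))
    (hXcadlag_r : ∀ ω t, ContinuousWithinAt (fun s => X s ω) (Set.Ici t) t)
    (hXcadlag_l : ∀ ω t, ∃ L, Filter.Tendsto (fun s => X s ω) (nhdsWithin t (Set.Iio t)) (nhds L))
    (hXadapted : ∀ t : ℝ, Measurable[F t] (X t))
    (hXsticky : Sticky μ T (fun t => F t) X)
    (f : EuclideanSpace ℝ (Fin d) → EuclideanSpace ℝ (Fin d))
    (hf : Continuous f) :
    Sticky μ T (fun t => F t) (fun t ω => f (X t ω)) := by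
  intro t ht δ hδ
  have hm : F t ≤ m0 := F.le t
  have htT : t < T := ht.2
  have hXmeas : ∀ u, Measurable (X u) := fun u => (hXadapted u).mono (F.le u) le_rfl
  -- the coordinate increment processes of f ∘ X
  set g : Fin d → ℝ → Ω → ℝ := fun i v ω => |f (X v ω) i - f (X t ω) i| with hgdef
  set B : Set Ω := {ω' | ∀ i, ∀ u ∈ Set.Icc t T, |f (X u ω') i - f (X t ω') i| < δ} with hBdef
  -- continuity and measurability of g
  have hgcwa : ∀ i, ∀ (ω : Ω) (u : ℝ), ContinuousWithinAt (fun v => g i v ω) (Set.Ici u) u := by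
    intro i ω u
    have h1 := hXcadlag_r ω u
    have hφ : Continuous fun x : EuclideanSpace ℝ (Fin d) => |f x i - f (X t ω) i| :=
      (((EuclideanSpace.proj i).continuous.comp hf).sub continuous_const).abs
    exact hφ.continuousAt.comp_continuousWithinAt h1
  have hgmeas : ∀ i v, Measurable fun ω => g i v ω := by
    intro i v
    have h1 : Measurable fun ω => f (X v ω) i :=
      ((EuclideanSpace.proj i).continuous.comp hf).measurable.comp (hXmeas v)
    have h2 : Measurable fun ω => f (X t ω) i :=
      ((EuclideanSpace.proj i).continuous.comp hf).measurable.comp (hXmeas t)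
    exact (h1.sub h2).abs
  -- Null-measurability of B via the capacitability lemma
  have hQcnt : ((Set.Icc t T ∩ Set.range ((↑) : ℚ → ℝ)) ∪ {T}).Countable :=
    ((Set.countable_range _).mono Set.inter_subset_right).union (Set.countable_singleton T)
  obtain ⟨e, he⟩ := hQcnt.exists_eq_range ⟨T, Or.inr rfl⟩
  have hHnull : ∀ i, NullMeasurableSet {ω | ∃ u ∈ Set.Icc t T, δ ≤ g i u ω} μ := by
    intro i
    rw [attain_eq_projH (g i) (hgcwa i) δ e he]
    exact nullMeasurableSet_projH μ (fun n j => isClosed_Icc)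
      (fun n j => measurableSet_lt measurable_const (hgmeas i (e j)))
  have hBc : Bᶜ = ⋃ i, {ω | ∃ u ∈ Set.Icc t T, δ ≤ g i u ω} := by
    ext ω
    simp only [hBdef, mem_compl_iff, mem_setOf_eq, mem_iUnion, hgdef]
    push_neg
    rfl
  have hBnull : NullMeasurableSet B μ := by
    have hBeq : B = (⋃ i, {ω | ∃ u ∈ Set.Icc t T, δ ≤ g i u ω})ᶜ := by
      rw [← hBc, compl_compl]
    rw [hBeq]
    exact (NullMeasurableSet.iUnion fun i => hHnull i).compl
  obtain ⟨B₀, hB₀sub, hB₀meas, hB₀eq⟩ := hBnull.exists_measurable_subset_ae_eq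
  have hindeq : B₀.indicator (fun _ => (1:ℝ)) =ᵐ[μ] B.indicator (fun _ => (1:ℝ)) := by
    have h := Filter.eventuallyEq_set.1 hB₀eq
    filter_upwards [h] with ω hω
    by_cases h1 : ω ∈ B₀
    · rw [Set.indicator_of_mem h1, Set.indicator_of_mem (hω.1 h1)]
    · rw [Set.indicator_of_notMem h1, Set.indicator_of_notMem (fun hc => h1 (hω.2 hc))]
  have hIntB₀ : Integrable (B₀.indicator fun _ => (1:ℝ)) μ :=
    (integrable_const (1:ℝ)).indicator hB₀meas
  -- the main localized estimate
  have main : ∀ n : ℕ, ∀ᵐ ω ∂μ, ‖X t ω‖ ≤ (n:ℝ) →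
      0 < (μ[B.indicator (fun _ => (1:ℝ)) | F t]) ω := by
    intro n
    have hcomp : IsCompact (Metric.closedBall (0 : EuclideanSpace ℝ (Fin d)) ((n:ℝ)+1)) :=
      isCompact_closedBall _ _
    have hUC := hcomp.uniformContinuousOn_of_continuous hf.continuousOn
    rw [Metric.uniformContinuousOn_iff] at hUC
    obtain ⟨η, hη, hηball⟩ := hUC δ hδ
    set κ := min η 1 with hκdef
    have hκpos : 0 < κ := lt_min hη one_pos
    have hκ1 : κ ≤ 1 := min_le_right _ _
    set δ' := κ / (d + 1) with hδ'def
    have hδ'pos : 0 < δ' := by positivity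
    have hsticky := hXsticky t ht δ' hδ'pos
    set A : Set Ω := {ω' | ∀ i, ∀ u ∈ Set.Icc t T, |X u ω' i - X t ω' i| < δ'} with hAdef
    have hIntA : Integrable (A.indicator fun _ => (1:ℝ)) μ := by
      by_contra hcon
      rw [condExp_of_not_integrable hcon] at hsticky
      obtain ⟨ω, hω⟩ := hsticky.exists
      simp at hω
    set C : Set Ω := {ω | ‖X t ω‖ ≤ (n:ℝ)} with hCdef
    have hCmeasF : MeasurableSet[F t] C := by
      exact (hXadapted t) (measurable_norm measurableSet_Iic)
    have hCmeas : MeasurableSet C := hm _ hCmeasF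
    -- the inclusion A ∩ C ⊆ B
    have hinc : ∀ ω, ω ∈ A → ω ∈ C → ω ∈ B := by
      intro ω hωA hωC i u hu
      have hd1 : (1:ℝ) ≤ (d:ℝ) := by
        have := i.pos
        exact_mod_cast this
      have hdp : (0:ℝ) < (d:ℝ) + 1 := by linarith
      -- the Euclidean distance bound
      have hdist : dist (X u ω) (X t ω) < κ := by
        rw [EuclideanSpace.dist_eq]
        rw [Real.sqrt_lt' hκpos]
        have hterm : ∀ j : Fin d, dist (X u ω j) (X t ω j) ^ 2 ≤ δ' ^ 2 := by
          intro j
          have h1 : |X u ω j - X t ω j| < δ' := hωA j u hu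
          rw [Real.dist_eq]
          have h0 : (0:ℝ) ≤ |X u ω j - X t ω j| := abs_nonneg _
          nlinarith
        calc ∑ j, dist (X u ω j) (X t ω j) ^ 2 ≤ ∑ _j : Fin d, δ' ^ 2 :=
              Finset.sum_le_sum fun j _ => hterm j
          _ = (d:ℝ) * δ' ^ 2 := by
              rw [Finset.sum_const, Finset.card_univ, Fintype.card_fin, nsmul_eq_mul]
          _ < κ ^ 2 := by
              rw [hδ'def, div_pow, ← mul_div_assoc,
                div_lt_iff₀ (by positivity : (0:ℝ) < ((d:ℝ)+1)^2)]
              have hκ2 : (0:ℝ) < κ ^ 2 := by positivity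
              nlinarith [mul_pos hκ2 (show (0:ℝ) < (d:ℝ)^2 + (d:ℝ) + 1 by positivity)]
      have hXtball : X t ω ∈ Metric.closedBall (0 : EuclideanSpace ℝ (Fin d)) ((n:ℝ)+1) := by
        rw [Metric.mem_closedBall, dist_zero_right]
        have : ‖X t ω‖ ≤ (n:ℝ) := hωC
        linarith
      have hXuball : X u ω ∈ Metric.closedBall (0 : EuclideanSpace ℝ (Fin d)) ((n:ℝ)+1) := by
        rw [Metric.mem_closedBall, dist_zero_right]
        have h1 : ‖X u ω‖ - ‖X t ω‖ ≤ dist (X u ω) (X t ω) := by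
          rw [dist_eq_norm]
          exact norm_sub_norm_le _ _
        have h2 : ‖X t ω‖ ≤ (n:ℝ) := hωC
        have h3 : dist (X u ω) (X t ω) < 1 := hdist.trans_le hκ1
        linarith
      have hfd : dist (f (X u ω)) (f (X t ω)) < δ :=
        hηball _ hXuball _ hXtball (hdist.trans_le (min_le_left _ _))
      have hcoord : |f (X u ω) i - f (X t ω) i| ≤ dist (f (X u ω)) (f (X t ω)) := by
        rw [EuclideanSpace.dist_eq]
        have h1 : |f (X u ω) i - f (X t ω) i|
            = Real.sqrt (dist (f (X u ω) i) (f (X t ω) i) ^ 2) := by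
          rw [Real.sqrt_sq_eq_abs, Real.dist_eq, abs_abs]
        rw [h1]
        refine Real.sqrt_le_sqrt ?_
        exact Finset.single_le_sum
          (f := fun j : Fin d => dist (f (X u ω) j) (f (X t ω) j) ^ 2)
          (fun j _ => sq_nonneg _) (Finset.mem_univ i)
      exact lt_of_le_of_lt hcoord hfd
    -- conditional expectation manipulations
    have hSMC : StronglyMeasurable[F t] (C.indicator fun _ => (1:ℝ)) :=
      stronglyMeasurable_const.indicator hCmeasF
    have hIntprod : Integrable
        (C.indicator (fun _ => (1:ℝ)) * A.indicator (fun _ => (1:ℝ))) μ := by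
      refine hIntA.bdd_mul (c := 1) ((hSMC.mono hm).aestronglyMeasurable) (Filter.Eventually.of_forall fun ω => ?_)
      by_cases h1 : ω ∈ C <;> simp [Set.indicator_apply, h1]
    have hpull := condExp_mul_of_stronglyMeasurable_left (μ := μ) hSMC hIntprod hIntA
    have hle2 : (C.indicator (fun _ => (1:ℝ)) * A.indicator (fun _ => (1:ℝ)))
        ≤ᵐ[μ] B₀.indicator (fun _ => (1:ℝ)) := by
      filter_upwards [hindeq] with ω hω
      show C.indicator (fun _ => (1:ℝ)) ω * A.indicator (fun _ => (1:ℝ)) ω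
        ≤ B₀.indicator (fun _ => (1:ℝ)) ω
      by_cases h1 : ω ∈ A
      · by_cases h2 : ω ∈ C
        · have hωB : ω ∈ B := hinc ω h1 h2
          rw [Set.indicator_of_mem h1, Set.indicator_of_mem h2, hω,
            Set.indicator_of_mem hωB]
          norm_num
        · rw [Set.indicator_of_notMem h2]
          rw [zero_mul]
          exact Set.indicator_apply_nonneg (fun _ => zero_le_one)
      · rw [Set.indicator_of_notMem h1, mul_zero]
        exact Set.indicator_apply_nonneg (fun _ => zero_le_one)
    have hmono := condExp_mono (m := F t) hIntprod hIntB₀ hle2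
    have hcongr := condExp_congr_ae (m := F t) (μ := μ) hindeq
    filter_upwards [hsticky, hpull, hmono, hcongr] with ω h1 h2 h3 h4
    intro hωn
    have hωC : ω ∈ C := hωn
    have hCone : C.indicator (fun _ => (1:ℝ)) ω = 1 := Set.indicator_of_mem hωC _
    have h2' : (μ[C.indicator (fun _ => (1:ℝ))
        * A.indicator (fun _ => (1:ℝ)) | F t]) ω
        = (μ[A.indicator (fun _ => (1:ℝ)) | F t]) ω := by
      rw [h2, Pi.mul_apply, hCone, one_mul]
    calc (0:ℝ) < (μ[A.indicator (fun _ => (1:ℝ)) | F t]) ω := h1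
      _ = (μ[C.indicator (fun _ => (1:ℝ))
            * A.indicator (fun _ => (1:ℝ)) | F t]) ω := h2'.symm
      _ ≤ (μ[B₀.indicator (fun _ => (1:ℝ)) | F t]) ω := h3
      _ = (μ[B.indicator (fun _ => (1:ℝ)) | F t]) ω := h4
  have hall := ae_all_iff.2 main
  filter_upwards [hall] with ω hω
  obtain ⟨n, hn⟩ := exists_nat_ge ‖X t ω‖
  exact hω n hn
end
end

section
/- If a $d$-dimensional continuous $\mathbb{F}$-adapted process $X=(X_t)_{t\in[0,T]}$ has conditional full support with respect to $\mathbb{F}$, then $X$ satisfies the joint $\mathbb{F}$-conditional up and down (CUD) condition: for any $h\in(0,T)$, any stopping times $\tau_1\le\tau_2$ with $\tau_2\ge\tau_1+h$ a.s., any $B\in\mathcal{F}_{\tau_1}$ with $P(B)>0$, and any signs $\alpha_1,\dots,\alpha_d\in\{+,-\}$, we have $P\big(\big[\bigcap_{i\in I^B}A_i^{\alpha_i}\big]\cap B\big)>0$ whenever $I^B\ne\emptyset$, where $A_i^+=\{X^i_{\tau_1}<X^i_{\tau_2}\}$, $A_i^-=\{X^i_{\tau_1}>X^i_{\tau_2}\}$,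 and $I^B$ is the set of indices $k$ with $P(\{X^k_{\tau_1}\ne X^k_{\tau_2}\}\cap B)>0$. -/
open MeasureTheory ProbabilityTheory Set
noncomputable section
variable {Ω : Type*}

/-- The joint conditional up-and-down (CUD) condition with respect to the Cheridito class. -/
def JointCUD {d : ℕ} {mΩ : MeasurableSpace Ω} (μ : Measure Ω) (T : ℝ)
    (F : MeasureTheory.Filtration ℝ mΩ) (X : ℝ → Ω → EuclideanSpace ℝ (Fin d)) : Prop :=
  ∀ h ∈ Set.Ioo (0:ℝ) T, ∀ τ₁ τ₂ : Ω → ℝ,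
    ∀ hτ₁ : IsStoppingTime F (fun ω => (τ₁ ω : WithTop ℝ)), IsStoppingTime F (fun ω => (τ₂ ω : WithTop ℝ)) →
    (∀ ω, τ₁ ω ∈ Set.Icc 0 T) → (∀ ω, τ₂ ω ∈ Set.Icc 0 T) →
    (∀ ω, τ₁ ω ≤ τ₂ ω) → (∀ᵐ ω ∂μ, τ₁ ω + h ≤ τ₂ ω) →
    ∀ B : Set Ω, MeasurableSet[hτ₁.measurableSpace] B → 0 < μ B →
    ∀ α : Fin d → Bool,
      {k : Fin d | 0 < μ ({ω | X (τ₁ ω) ω k ≠ X (τ₂ ω) ω k} ∩ B)}.Nonempty →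
      0 < μ ((⋂ k ∈ {k : Fin d | 0 < μ ({ω | X (τ₁ ω) ω k ≠ X (τ₂ ω) ω k} ∩ B)},
        (if α k then {ω | X (τ₁ ω) ω k < X (τ₂ ω) ω k}
         else {ω | X (τ₂ ω) ω k < X (τ₁ ω) ω k})) ∩ B)

lemma coord_abs_le_norm {d : ℕ} (x : EuclideanSpace ℝ (Fin d)) (k : Fin d) : |x k| ≤ ‖x‖ := by
  rw [EuclideanSpace.norm_eq]
  have h : |x k| = Real.sqrt (|x k|^2) := by rw [Real.sqrt_sq_eq_abs, abs_abs]
  rw [h]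
  apply Real.sqrt_le_sqrt
  exact Finset.single_le_sum (f := fun i => ‖x i‖^2) (fun i _ => by positivity)
    (Finset.mem_univ k) |>.trans_eq' (by rw [Real.norm_eq_abs])

lemma sbEvent_measurableSet {E : Type*} [NormedAddCommGroup E] [MeasurableSpace E] [BorelSpace E]
    [SecondCountableTopology E] [mΩ : MeasurableSpace Ω]
    (X : ℝ → Ω → E) (hX : ∀ t, Measurable (X t)) (hXcont : ∀ ω, Continuous fun t => X t ω)
    {t₀ T : ℝ} (ht : t₀ < T) (ε : ℝ) (f : ℝ → E) (hf : ContinuousOn f (Set.Icc t₀ T)) :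
    MeasurableSet (sbEvent X t₀ T ε f) := by
  haveI : Nonempty (Icc t₀ T) := ⟨⟨t₀, le_refl _, ht.le⟩⟩
  set u : ℕ → Icc t₀ T := TopologicalSpace.denseSeq (Icc t₀ T) with hu
  have hud : DenseRange u := TopologicalSpace.denseRange_denseSeq _
  have hGcont : ∀ ω, Continuous fun t : Icc t₀ T => ‖X t ω - X t₀ ω - f t‖ := by
    intro ω
    exact ((((hXcont ω).comp continuous_subtype_val).sub continuous_const).sub hf.restrict).norm
  have hset : sbEvent X t₀ T ε f =
      ⋃ n : ℕ, ⋂ m : ℕ, {ω | ‖X (u m) ω - X t₀ ω - f (u m)‖ ≤ ε - 1/(n+1)} := by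
    ext ω
    constructor
    · intro hω
      obtain ⟨ts, -, hmax⟩ := isCompact_univ.exists_isMaxOn univ_nonempty
        (hGcont ω).continuousOn
      have hlt : ‖X (ts:ℝ) ω - X t₀ ω - f ts‖ < ε := hω _ ts.2
      obtain ⟨n, hn⟩ := exists_nat_one_div_lt (sub_pos.mpr hlt)
      refine mem_iUnion.mpr ⟨n, mem_iInter.mpr fun m => ?_⟩
      have := hmax (mem_univ (u m))
      simp only [mem_setOf_eq]
      have h2 : (1:ℝ)/(n+1) ≤ ε - ‖X (ts:ℝ) ω - X t₀ ω - f ts‖ := hn.le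
      calc ‖X (u m : ℝ) ω - X t₀ ω - f (u m)‖ ≤ ‖X (ts:ℝ) ω - X t₀ ω - f ts‖ := this
        _ ≤ ε - 1/(n+1) := by linarith
    · intro hω
      obtain ⟨n, hn⟩ := mem_iUnion.mp hω
      rw [mem_iInter] at hn
      intro t htmem
      have hclosed : IsClosed {x : Icc t₀ T | ‖X (x:ℝ) ω - X t₀ ω - f x‖ ≤ ε - 1/(n+1)} :=
        isClosed_le (hGcont ω) continuous_const
      have hall : ∀ x : Icc t₀ T, ‖X (x:ℝ) ω - X t₀ ω - f x‖ ≤ ε - 1/(n+1) := by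
        intro x
        have hsub : (univ : Set (Icc t₀ T)) ⊆ {x | ‖X (x:ℝ) ω - X t₀ ω - f x‖ ≤ ε - 1/(n+1)} := by
          rw [← hclosed.closure_eq, ← hud.closure_eq]
          refine closure_mono ?_
          rintro - ⟨m, rfl⟩; exact hn m
        exact hsub (mem_univ x)
      have := hall ⟨t, htmem⟩
      have hpos : (0:ℝ) < 1/(n+1) := by positivity
      calc ‖X t ω - X t₀ ω - f t‖ ≤ ε - 1/(n+1) := this
        _ < ε := by linarith
  rw [hset]
  refine MeasurableSet.iUnion fun n => MeasurableSet.iInter fun m => ?_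
  exact measurableSet_le ((((hX _).sub (hX t₀)).sub measurable_const).norm) measurable_const


set_option maxHeartbeats 2000000 in
/-- conditional full support implies the joint conditional up-and-down
condition. -/
theorem jointCUD_of_cfs
    {mΩ : MeasurableSpace Ω} (μ : Measure Ω) [IsProbabilityMeasure μ]
    (T : ℝ) (hT : 0 < T) (d : ℕ)
    (F : MeasureTheory.Filtration ℝ mΩ)
    -- usual conditions
    (hFright : ∀ t : ℝ, (F t : MeasurableSpace Ω) = ⨅ s ∈ Set.Ioi t, (F s : MeasurableSpace Ω))
    (hFcomplete : ∀ (t : ℝ) (N : Set Ω), μ N = 0 → MeasurableSet[F t] N)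
    (X : ℝ → Ω → EuclideanSpace ℝ (Fin d))
    (hXcont : ∀ ω, Continuous fun t => X t ω)
    (hXadapted : ∀ t : ℝ, Measurable[F t] (X t))
    (hCFS : HasCFS μ T (fun t => F t) X) :
    JointCUD μ T F X := by
  intro h hh τ₁ τ₂ hτ₁ hτ₂ hτ₁m hτ₂m hle12 hgap B hB hμB α hS
  obtain ⟨h0, hhT⟩ := hh
  set δ : ℝ := h / 2 with hδdef
  have hδ : 0 < δ := by positivity
  -- a.e. on B, τ₁ ≤ T - h
  have haeτ₁ : ∀ᵐ ω ∂μ, ω ∈ B → τ₁ ω ≤ T - h := by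
    filter_upwards [hgap] with ω hω _
    have := (hτ₂m ω).2
    linarith
  -- find the first dyadic level with positive mass
  have hP : ∃ j : ℕ, 0 < μ (B ∩ {ω | τ₁ ω ≤ j * δ}) := by
    obtain ⟨N, hN⟩ := exists_nat_ge ((T - h) / δ)
    have hN' : T - h ≤ N * δ := by
      rw [div_le_iff₀ hδ] at hN; linarith
    refine ⟨N, lt_of_lt_of_le hμB (measure_mono_ae ?_)⟩
    filter_upwards [haeτ₁] with ω hω hωB
    exact ⟨hωB, le_trans (hω hωB) hN'⟩
  obtain ⟨j, hjpos, hjmin⟩ : ∃ j : ℕ, 0 < μ (B ∩ {ω | τ₁ ω ≤ j * δ}) ∧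
      ∀ i : ℕ, i < j → μ (B ∩ {ω | τ₁ ω ≤ i * δ}) = 0 := by
    refine ⟨Nat.find hP, Nat.find_spec hP, fun i hi => ?_⟩
    exact le_antisymm (not_lt.mp (Nat.find_min hP hi)) zero_le
  set t₀ : ℝ := j * δ with ht₀def
  have ht₀0 : 0 ≤ t₀ := by positivity
  -- the part of B ∩ {τ₁ ≤ t₀} where τ₁ < t₀ - δ is null, and t₀ < T
  have hmain : μ ((B ∩ {ω | τ₁ ω ≤ t₀}) \ {ω | t₀ - δ ≤ τ₁ ω}) = 0 ∧ t₀ < T := by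
    rcases Nat.eq_zero_or_pos j with hj0 | hjpos'
    · constructor
      · refine measure_mono_null (fun ω hω => ?_) (measure_empty (μ := μ))
        exfalso
        have h1 : τ₁ ω < t₀ - δ := not_le.mp hω.2
        have h2 : 0 ≤ τ₁ ω := (hτ₁m ω).1
        rw [ht₀def, hj0] at h1
        push_cast at h1
        linarith
      · rw [ht₀def, hj0]; push_cast; linarith
    · obtain ⟨m, hjm⟩ := Nat.exists_eq_succ_of_ne_zero hjpos'.ne'
      have hnull : μ (B ∩ {ω | τ₁ ω ≤ m * δ}) = 0 := hjmin m (by omega)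
      have ht₀m : t₀ = m * δ + δ := by rw [ht₀def, hjm]; push_cast; ring
      constructor
      · refine measure_mono_null (fun ω hω => ?_) hnull
        refine ⟨hω.1.1, ?_⟩
        have h1 : τ₁ ω < t₀ - δ := not_le.mp hω.2
        simp only [mem_setOf_eq]
        linarith [ht₀m]
      · by_contra hc
        push_neg at hc
        have hTm : T - h ≤ m * δ := by
          rw [ht₀m] at hc
          linarith
        have : 0 < μ (B ∩ {ω | τ₁ ω ≤ m * δ}) := by
          refine lt_of_lt_of_le hμB (measure_mono_ae ?_)
          filter_upwards [haeτ₁] with ω hω hωB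
          exact ⟨hωB, le_trans (hω hωB) hTm⟩
        rw [hnull] at this; exact lt_irrefl _ this
  obtain ⟨hnullpart, ht₀T⟩ := hmain
  -- B₁
  set B₁ : Set Ω := (B ∩ {ω | τ₁ ω ≤ t₀}) ∩ {ω | t₀ - δ ≤ τ₁ ω} with hB₁def
  have hμB₁ : 0 < μ B₁ := by
    by_contra hc
    push_neg at hc
    have hc0 : μ B₁ = 0 := le_antisymm hc zero_le
    have := measure_le_inter_add_diff μ (B ∩ {ω | τ₁ ω ≤ t₀}) {ω | t₀ - δ ≤ τ₁ ω}
    rw [← hB₁def] at this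
    rw [hc0, hnullpart, add_zero] at this
    exact absurd (le_antisymm (this.trans zero_le) zero_le) hjpos.ne'
  have hB₁meas : MeasurableSet[F t₀] B₁ := by
    refine MeasurableSet.inter (by simpa using ((hτ₁.measurableSet B).mp hB).2 t₀) ?_
    have h1 : MeasurableSet[F (t₀ - δ)] {ω | τ₁ ω < t₀ - δ} := by simpa only [WithTop.coe_lt_coe] using hτ₁.measurableSet_lt (t₀ - δ)
    have h2 : MeasurableSet[F t₀] {ω | τ₁ ω < t₀ - δ} :=
      F.mono (by linarith) _ h1
    have : {ω | t₀ - δ ≤ τ₁ ω} = {ω | τ₁ ω < t₀ - δ}ᶜ := by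
      ext ω; simp [not_lt]
    rw [this]; exact h2.compl
  -- stopped value
  have hAdapted : StronglyAdapted F X := fun t => (hXadapted t).stronglyMeasurable
  have hprog : ProgMeasurable F X := hAdapted.progMeasurable_of_continuous hXcont
  set Y : Ω → EuclideanSpace ℝ (Fin d) := stoppedValue X (fun ω => min (τ₁ ω) t₀) with hYdef
  have hYsm : StronglyMeasurable[F t₀] Y :=
    stronglyMeasurable_stoppedValue_of_le hprog (hτ₁.min_const t₀) fun ω => min_le_right _ _
  -- bound event
  have hGM : ∃ M : ℕ, 0 < μ (B₁ ∩ {ω | ‖X t₀ ω - Y ω‖ ≤ M}) := by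
    by_contra hc
    push_neg at hc
    have hc' : ∀ M : ℕ, μ (B₁ ∩ {ω | ‖X t₀ ω - Y ω‖ ≤ M}) = 0 :=
      fun M => le_antisymm (hc M) zero_le
    have hcover : B₁ ⊆ ⋃ M : ℕ, B₁ ∩ {ω | ‖X t₀ ω - Y ω‖ ≤ M} := by
      intro ω hω
      obtain ⟨M, hM⟩ := exists_nat_ge ‖X t₀ ω - Y ω‖
      exact mem_iUnion.mpr ⟨M, hω, hM⟩
    have : μ B₁ = 0 := by
      refine measure_mono_null hcover ?_
      exact measure_iUnion_null fun M => hc' M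
    rw [this] at hμB₁; exact lt_irrefl _ hμB₁
  obtain ⟨M, hμB'⟩ := hGM
  set B' : Set Ω := B₁ ∩ {ω | ‖X t₀ ω - Y ω‖ ≤ M} with hB'def
  have hB'meas : MeasurableSet[F t₀] B' := by
    have hdiff : StronglyMeasurable[F t₀] (fun ω => ‖X t₀ ω - Y ω‖) :=
      ((hXadapted t₀).stronglyMeasurable.sub hYsm).norm
    have : {ω | ‖X t₀ ω - Y ω‖ ≤ (M:ℝ)} = (fun ω => ‖X t₀ ω - Y ω‖) ⁻¹' Iic (M:ℝ) := rfl
    exact hB₁meas.inter (this ▸ hdiff.measurable measurableSet_Iic)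
  -- the deterministic path
  set v : EuclideanSpace ℝ (Fin d) := (WithLp.equiv 2 (Fin d → ℝ)).symm
    (fun k => if α k then (1:ℝ) else -1) with hvdef
  have hvk : ∀ k, v k = if α k then (1:ℝ) else -1 := fun k => rfl
  set c : ℝ := (M : ℝ) + 3 with hcdef
  set f : ℝ → EuclideanSpace ℝ (Fin d) := fun t => (min (t - t₀) δ * (c / δ)) • v with hfdef
  have hfcont : Continuous f := by
    exact (((continuous_id.sub continuous_const).min continuous_const).mul
      continuous_const).smul continuous_const
  have hf0 : f t₀ = 0 := by
    simp only [hfdef, sub_self, min_eq_left hδ.le, zero_mul, zero_smul]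
  have hcfs := hCFS t₀ ⟨ht₀0, ht₀T⟩ f hfcont.continuousOn hf0 1 one_pos
  set E' : Set Ω := sbEvent X t₀ T 1 f with hE'def
  have hE'meas : MeasurableSet E' :=
    sbEvent_measurableSet X (fun t => (hXadapted t).mono (F.le t) le_rfl) hXcont ht₀T 1 f
      hfcont.continuousOn
  set g : Ω → ℝ := E'.indicator (fun _ => (1:ℝ)) with hgdef
  have hgint : Integrable g μ := (integrable_const 1).indicator hE'meas
  -- positivity of μ (B' ∩ E')
  have hposint : 0 < ∫ ω in B', (μ[g | F t₀]) ω ∂μ := by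
    rw [setIntegral_pos_iff_support_of_nonneg_ae]
    · refine lt_of_lt_of_le hμB' (measure_mono_ae ?_)
      filter_upwards [hcfs] with ω hω hωB'
      exact ⟨ne_of_gt hω, hωB'⟩
    · exact ae_restrict_of_ae (hcfs.mono fun ω hω => hω.le)
    · exact integrable_condExp.integrableOn
  have hμE'B' : 0 < μ (B' ∩ E') := by
    have heq : ∫ ω in B', (μ[g | F t₀]) ω ∂μ = (μ (B' ∩ E')).toReal := by
      rw [setIntegral_condExp (F.le t₀) hgint hB'meas]
      rw [hgdef, setIntegral_indicator hE'meas]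
      simp [measure_lt_top, Measure.real]
    rw [heq] at hposint
    rcases eq_or_lt_of_le (zero_le (a := μ (B' ∩ E'))) with heq0 | hlt
    · rw [← heq0] at hposint; simp at hposint
    · exact hlt
  -- final inclusion
  have hNnull : μ {ω | ¬ (τ₁ ω + h ≤ τ₂ ω)} = 0 := ae_iff.mp hgap
  have hincl : (B' ∩ E') \ {ω | ¬ (τ₁ ω + h ≤ τ₂ ω)} ⊆
      (⋂ k ∈ {k : Fin d | 0 < μ ({ω | X (τ₁ ω) ω k ≠ X (τ₂ ω) ω k} ∩ B)},
        (if α k then {ω | X (τ₁ ω) ω k < X (τ₂ ω) ω k}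
         else {ω | X (τ₂ ω) ω k < X (τ₁ ω) ω k})) ∩ B := by
    rintro ω ⟨⟨⟨⟨⟨hωB, hωle⟩, hωge⟩, hωM⟩, hωE'⟩, hωN⟩
    have hgapω : τ₁ ω + h ≤ τ₂ ω := not_not.mp hωN
    simp only [mem_setOf_eq] at hωle hωge hωM
    have hτ₂ge : t₀ + δ ≤ τ₂ ω := by
      have : t₀ - δ + h ≤ τ₂ ω := by linarith
      rw [hδdef] at *; linarith
    have hτ₂le : τ₂ ω ≤ T := (hτ₂m ω).2
    have hYω : Y ω = X (τ₁ ω) ω := by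
      rw [hYdef]
      simp only [stoppedValue, min_eq_left hωle]
      simp [← WithTop.coe_min, min_eq_left hωle]
    rw [hYω] at hωM
    have hsb : ‖X (τ₂ ω) ω - X t₀ ω - f (τ₂ ω)‖ < 1 :=
      hωE' (τ₂ ω) ⟨by linarith, hτ₂le⟩
    have hfτ₂ : ∀ k, f (τ₂ ω) k = c * v k := by
      intro k
      have hmin : min (τ₂ ω - t₀) δ = δ := min_eq_right (by linarith)
      have : f (τ₂ ω) = (δ * (c / δ)) • v := by rw [hfdef]; simp only [hmin]
      rw [this]
      have hδc : δ * (c / δ) = c := by field_simp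
      rw [hδc]; rfl
    have hkey : ∀ k : Fin d,
        ω ∈ (if α k then {ω | X (τ₁ ω) ω k < X (τ₂ ω) ω k}
             else {ω | X (τ₂ ω) ω k < X (τ₁ ω) ω k}) := by
      intro k
      have h1 : |(X (τ₂ ω) ω - X t₀ ω - f (τ₂ ω)) k| < 1 :=
        lt_of_le_of_lt (coord_abs_le_norm _ k) hsb
      have h2 : |(X t₀ ω - X (τ₁ ω) ω) k| ≤ M :=
        le_trans (coord_abs_le_norm _ k) hωM
      have he1 : (X (τ₂ ω) ω - X t₀ ω - f (τ₂ ω)) k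
          = X (τ₂ ω) ω k - X t₀ ω k - f (τ₂ ω) k := rfl
      have he2 : (X t₀ ω - X (τ₁ ω) ω) k = X t₀ ω k - X (τ₁ ω) ω k := rfl
      rw [he1] at h1
      rw [he2] at h2
      rw [abs_lt] at h1
      rw [abs_le] at h2
      have hfk := hfτ₂ k
      rw [hvk k] at hfk
      cases hαk : α k with
      | true =>
        simp only [hαk, reduceIte, mem_setOf_eq]
        rw [hαk] at hfk
        norm_num at hfk
        have hcM : (M:ℝ) + 3 = c := rfl
        nlinarith [hfk]
      | false =>
        simp only [hαk, Bool.false_eq_true, reduceIte, mem_setOf_eq]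
        rw [hαk] at hfk
        norm_num at hfk
        nlinarith [hfk]
    refine ⟨mem_iInter₂.mpr fun k _ => hkey k, hωB⟩
  calc (0:ENNReal) < μ (B' ∩ E') := hμE'B'
    _ = μ ((B' ∩ E') \ {ω | ¬ (τ₁ ω + h ≤ τ₂ ω)}) := (measure_diff_null hNnull).symm
    _ ≤ _ := measure_mono hincl
end
end

section
/- Suppose the $d$-dimensional càdlàg adapted price process $S=(S_t)_{t\in[0,T]}$ satisfies the joint $\mathbb{F}$-CUD condition with respect to the Cheridito class $\mathcal{L}(\mathbb{F})$. Then $S$ admits no arbitrage in the Cheridito class: there is no simple strategy $\Phi$ with minimal waiting time $h>0$ between rebalancing times such that the terminal value $V_T(\Phi;0)$ of the self-financing portfolio with zero initial capital satisfies $P(V_T(\Phi;0)\ge0)=1$ and $P(V_T(\Phi;0)>0)>0$. -/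
open MeasureTheory ProbabilityTheory Set
noncomputable section
variable {Ω : Type*}

open scoped RealInnerProductSpace

/-! ### Auxiliary material for the proof -/

/-- sign pattern predicate: `0 = negative`, `1 = zero`, `2 = positive`. -/
private def pt (i : Fin 3) (x : ℝ) : Prop :=
  if (i : ℕ) = 0 then x < 0 else if (i : ℕ) = 1 then x = 0 else 0 < x

private lemma pt_total (x : ℝ) : ∃ i : Fin 3, pt i x := by
  rcases lt_trichotomy x 0 with hx | hx | hx
  · exact ⟨0, by simp [pt, hx]⟩
  · exact ⟨1, by simp [pt, hx]⟩
  · exact ⟨2, by simp [pt, hx]⟩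

private lemma pt_meas (i : Fin 3) : MeasurableSet {x : ℝ | pt i x} := by
  unfold pt
  split_ifs
  · exact measurableSet_Iio
  · exact measurableSet_eq
  · exact measurableSet_Ioi

/-- A right-continuous adapted process is progressively measurable. -/
private lemma progMeas_rc {mΩ : MeasurableSpace Ω} {E : Type*} [NormedAddCommGroup E]
    [SecondCountableTopology E] [MeasurableSpace E] [BorelSpace E] (F : Filtration ℝ mΩ)
    (S : ℝ → Ω → E) (hadapt : ∀ t, Measurable[F t] (S t))
    (hrc : ∀ ω t, ContinuousWithinAt (fun s => S s ω) (Set.Ici t) t) :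
    ProgMeasurable F S := by
  intro i
  have key : ∀ n : ℕ, StronglyMeasurable[Subtype.instMeasurableSpace.prod (F i)]
      (fun p : Set.Iic i × Ω => S (min i ((⌈(p.1 : ℝ) * 2 ^ n⌉ : ℝ) / 2 ^ n)) p.2) := by
    intro n
    apply Measurable.stronglyMeasurable
    have h2 : Measurable[(F i).prod (inferInstance : MeasurableSpace ℤ)]
        (fun q : Ω × ℤ => S (min i ((q.2 : ℝ) / 2 ^ n)) q.1) := by
      apply measurable_from_prod_countable_left
      intro k
      dsimp only
      exact (hadapt _).mono (F.mono (min_le_left _ _)) le_rfl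
    have h1 : @Measurable (Set.Iic i × Ω) (Ω × ℤ) (Subtype.instMeasurableSpace.prod (F i))
        ((F i).prod inferInstance) (fun p => (p.2, (⌈(p.1 : ℝ) * 2 ^ n⌉ : ℤ))) :=
      (@measurable_snd _ _ Subtype.instMeasurableSpace (F i)).prodMk
        (Int.measurable_ceil.comp ((measurable_subtype_coe.comp
          (@measurable_fst _ _ Subtype.instMeasurableSpace (F i))).mul_const _))
    exact h2.comp h1
  apply @stronglyMeasurable_of_tendsto (Set.Iic i × Ω) E ℕ
    (Subtype.instMeasurableSpace.prod (F i)) _ _ Filter.atTop _ _ _ _ key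
  rw [tendsto_pi_nhds]
  rintro ⟨s, ω⟩
  have hs : (s : ℝ) ≤ i := s.2
  have hle : ∀ n : ℕ, (s : ℝ) ≤ (⌈(s : ℝ) * 2 ^ n⌉ : ℝ) / 2 ^ n := by
    intro n
    rw [le_div_iff₀ (by positivity)]
    exact Int.le_ceil _
  have hub : ∀ n : ℕ, (⌈(s : ℝ) * 2 ^ n⌉ : ℝ) / 2 ^ n ≤ (s : ℝ) + (1 / 2) ^ n := by
    intro n
    rw [div_le_iff₀ (by positivity)]
    have := (Int.ceil_lt_add_one ((s : ℝ) * 2 ^ n)).le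
    calc (⌈(s : ℝ) * 2 ^ n⌉ : ℝ) ≤ (s : ℝ) * 2 ^ n + 1 := this
    _ = (s : ℝ) * 2 ^ n + (1/2) ^ n * 2 ^ n := by rw [← mul_pow]; norm_num
    _ = ((s : ℝ) + (1/2) ^ n) * 2 ^ n := by ring
  have hlim : Filter.Tendsto (fun n : ℕ => min i ((⌈(s : ℝ) * 2 ^ n⌉ : ℝ) / 2 ^ n))
      Filter.atTop (nhdsWithin (s : ℝ) (Set.Ici (s : ℝ))) := by
    apply tendsto_nhdsWithin_of_tendsto_nhds_of_eventually_within
    · have hd : Filter.Tendsto (fun n : ℕ => (⌈(s : ℝ) * 2 ^ n⌉ : ℝ) / 2 ^ n)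
          Filter.atTop (nhds (s : ℝ)) := by
        apply tendsto_of_tendsto_of_tendsto_of_le_of_le tendsto_const_nhds _ hle hub
        have : Filter.Tendsto (fun n : ℕ => (s:ℝ) + (1/2)^n) Filter.atTop (nhds ((s:ℝ) + 0)) :=
          tendsto_const_nhds.add (tendsto_pow_atTop_nhds_zero_of_lt_one (by norm_num) (by norm_num))
        simpa using this
      have := (tendsto_const_nhds (x := i) (f := Filter.atTop (α := ℕ))).min hd
      rwa [min_eq_right hs] at this
    · exact Filter.Eventually.of_forall fun n => le_min hs (hle n)
  exact ((hrc ω s).tendsto).comp hlim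

/-- one increment of the portfolio value -/
private def incr {d : ℕ} (S : ℝ → Ω → EuclideanSpace ℝ (Fin d)) (T : ℝ) (τ : ℕ → Ω → ℝ)
    (φ : ℕ → Ω → EuclideanSpace ℝ (Fin d)) (j : ℕ) (ω : Ω) : ℝ :=
  ⟪φ j ω, S (min (τ (j+1) ω) T) ω - S (min (τ j ω) T) ω⟫

/-- the portfolio value after `m` trading periods -/
private def vproc {d : ℕ} (S : ℝ → Ω → EuclideanSpace ℝ (Fin d)) (T : ℝ) (τ : ℕ → Ω → ℝ)
    (φ : ℕ → Ω → EuclideanSpace ℝ (Fin d)) (m : ℕ) (ω : Ω) : ℝ :=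
  ∑ j ∈ Finset.range m, incr S T τ φ j ω

private lemma inner_expand {d : ℕ} (x y : EuclideanSpace ℝ (Fin d)) :
    ⟪x, y⟫ = ∑ k, x k * y k := by
  simp [PiLp.inner_apply, RCLike.inner_apply, conj_trivial]
  exact Finset.sum_congr rfl fun _ _ => mul_comm _ _

private lemma stm_congr {mΩ : MeasurableSpace Ω} {F : Filtration ℝ mΩ} {f g : Ω → WithTop ℝ}
    (hf : IsStoppingTime F f) (hg : IsStoppingTime F g) (h : f = g) :
    hf.measurableSpace = hg.measurableSpace := by
  subst h; rfl

private lemma key_lemma {d : ℕ} {mΩ : MeasurableSpace Ω} (μ : Measure Ω) [IsProbabilityMeasure μ]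
    (T : ℝ) (hT : 0 < T) (F : Filtration ℝ mΩ)
    (S : ℝ → Ω → EuclideanSpace ℝ (Fin d)) (hCUD : JointCUD μ T F S)
    (h : ℝ) (hh : 0 < h)
    (τ τ' : Ω → ℝ) (ψ : Ω → EuclideanSpace ℝ (Fin d))
    (hstτ : IsStoppingTime F (fun ω => (τ ω : WithTop ℝ)))
    (hstτ' : IsStoppingTime F (fun ω => (τ' ω : WithTop ℝ)))
    (hτ0 : ∀ ω, 0 ≤ τ ω) (hgap : ∀ ω, τ ω + h ≤ τ' ω)
    (A' : Set Ω) (s : Fin d → Fin 3) {m : ℕ}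
    (hA'meas : MeasurableSet[hstτ.measurableSpace] A')
    (hA'pat : ∀ ω ∈ A', ∀ k, pt (s k) (ψ ω k))
    (hApos : 0 < μ (A' ∩ {ω | τ ω ≤ T - 1/(m+1 : ℝ)}))
    (N : Set Ω) (hN : μ N = 0) :
    ∃ ω, ω ∈ A' ∧ ω ∉ N ∧ (⟪ψ ω, S (min (τ' ω) T) ω - S (min (τ ω) T) ω⟫ ≤ 0) ∧
      ∀ k0 : Fin d, 0 < μ ({ω' | ψ ω' k0 ≠ 0 ∧
          S (min (τ ω') T) ω' k0 ≠ S (min (τ' ω') T) ω' k0}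
          ∩ (A' ∩ {ω' | τ ω' ≤ T - 1/(m+1 : ℝ)})) →
        ⟪ψ ω, S (min (τ' ω) T) ω - S (min (τ ω) T) ω⟫ < 0 := by
  classical
  have hm1 : (0:ℝ) < 1/(m+1 : ℝ) := by positivity
  set c := T - 1/(m+1 : ℝ) with hc
  set ε := min (min (1/(m+1 : ℝ)) h) (T/2) with hε
  have hε0 : 0 < ε := lt_min (lt_min hm1 hh) (by linarith)
  have hεT : ε < T := lt_of_le_of_lt (min_le_right _ _) (by linarith)
  have hεh : ε ≤ h := (min_le_left _ _).trans (min_le_right _ _)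
  have hεm : ε ≤ 1/(m+1 : ℝ) := (min_le_left _ _).trans (min_le_left _ _)
  have hεT2 : ε ≤ T/2 := min_le_right _ _
  have hcε : c ≤ T - ε := by rw [hc]; linarith
  set B := A' ∩ {ω | τ ω ≤ c} with hB
  set τ₁ := fun ω => min (τ ω) (T - ε) with hτ₁
  set τ₂ := fun ω => min (τ' ω) T with hτ₂
  have hst₁ : IsStoppingTime F (fun ω => (τ₁ ω : WithTop ℝ)) := by
    rw [show (fun ω => ((τ₁ ω : ℝ) : WithTop ℝ))
        = fun ω => min (τ ω : WithTop ℝ) ((T - ε : ℝ) : WithTop ℝ) from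
      funext fun ω => WithTop.coe_min _ _]
    exact hstτ.min_const (T - ε)
  have hst₂ : IsStoppingTime F (fun ω => (τ₂ ω : WithTop ℝ)) := by
    rw [show (fun ω => ((τ₂ ω : ℝ) : WithTop ℝ))
        = fun ω => min (τ' ω : WithTop ℝ) ((T : ℝ) : WithTop ℝ) from
      funext fun ω => WithTop.coe_min _ _]
    exact hstτ'.min_const T
  have hττ' : ∀ ω, τ ω ≤ τ' ω := fun ω => by have := hgap ω; linarith
  have hBmeas : MeasurableSet[hst₁.measurableSpace] B := by
    rw [stm_congr hst₁ (hstτ.min_const (T - ε)) (funext fun ω => WithTop.coe_min _ _),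
      IsStoppingTime.measurableSet_min_const_iff]
    constructor
    · refine hA'meas.inter ?_
      rw [hstτ.measurableSet]
      refine ⟨le_iSup (fun t => F t) c _ (by simpa using hstτ c), fun i => ?_⟩
      have hset : {ω | τ ω ≤ c} ∩ {ω | (τ ω : WithTop ℝ) ≤ i}
          = {ω | (τ ω : WithTop ℝ) ≤ ((min c i : ℝ) : WithTop ℝ)} := by
        ext ω; simp [le_min_iff]
      rw [hset]
      exact F.mono (min_le_right c i) _ (hstτ (min c i))
    · have hmem : MeasurableSet[F c] (A' ∩ {ω | τ ω ≤ c}) :=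
        by simpa using ((hstτ.measurableSet A').mp hA'meas).2 c
      exact F.mono hcε _ hmem
  have hBpos : 0 < μ B := hApos
  have hgap2 : ∀ ω, τ₁ ω + ε ≤ τ₂ ω := by
    intro ω
    rcases le_or_gt (τ ω) (T - ε) with hle | hlt
    · rw [hτ₁]
      dsimp only
      rw [min_eq_left hle]
      refine le_min ?_ ?_
      · linarith [hgap ω]
      · linarith
    · rw [hτ₁, hτ₂]
      dsimp only
      rw [min_eq_right hlt.le]
      have h2 : T ≤ τ' ω := by linarith [hgap ω]
      rw [min_eq_right h2]
      linarith
  have hb₁ : ∀ ω, τ₁ ω ∈ Set.Icc 0 T :=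
    fun ω => ⟨le_min (hτ0 ω) (by linarith), (min_le_right _ _).trans (by linarith)⟩
  have hb₂ : ∀ ω, τ₂ ω ∈ Set.Icc 0 T :=
    fun ω => ⟨le_min (by linarith [hτ0 ω, hgap ω]) hT.le, min_le_right _ _⟩
  have hmono12 : ∀ ω, τ₁ ω ≤ τ₂ ω := fun ω => min_le_min (hττ' ω) (by linarith)
  have hBτ : ∀ ω ∈ B, τ₁ ω = min (τ ω) T ∧ τ₂ ω = min (τ' ω) T := by
    intro ω hω
    have h1 : τ ω ≤ c := hω.2
    constructor
    · rw [hτ₁]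
      dsimp only
      rw [min_eq_left (by linarith), min_eq_left (by linarith)]
    · rfl
  have hIeq : ∀ k : Fin d, ({ω | S (τ₁ ω) ω k ≠ S (τ₂ ω) ω k} ∩ B)
      = ({ω' | S (min (τ ω') T) ω' k ≠ S (min (τ' ω') T) ω' k} ∩ B) := by
    intro k; ext ω
    simp only [Set.mem_inter_iff, Set.mem_setOf_eq, and_congr_left_iff]
    intro hω
    rw [(hBτ ω hω).1, (hBτ ω hω).2]
  by_cases hIne : {k : Fin d | 0 < μ ({ω | S (τ₁ ω) ω k ≠ S (τ₂ ω) ω k} ∩ B)}.Nonempty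
  · -- some coordinate really moves on B
    set α : Fin d → Bool := fun k => decide ((s k : ℕ) = 0) with hα
    have hcud := hCUD ε ⟨hε0, hεT⟩ τ₁ τ₂ hst₁ hst₂ hb₁ hb₂ hmono12
      (Filter.Eventually.of_forall hgap2) B hBmeas hBpos α hIne
    set I := {k : Fin d | 0 < μ ({ω | S (τ₁ ω) ω k ≠ S (τ₂ ω) ω k} ∩ B)} with hI
    set U := ⋃ k : Fin d, (if k ∈ I then (∅ : Set Ω)
      else ({ω | S (τ₁ ω) ω k ≠ S (τ₂ ω) ω k} ∩ B)) with hU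
    have hUnull : μ U = 0 := by
      refine measure_iUnion_null fun k => ?_
      split_ifs with hk
      · simp
      · rw [hI, Set.mem_setOf_eq] at hk
        exact le_antisymm (not_lt.mp hk) zero_le
    obtain ⟨ω, hωmem⟩ : ((((⋂ k ∈ I, (if α k then {ω | S (τ₁ ω) ω k < S (τ₂ ω) ω k}
        else {ω | S (τ₂ ω) ω k < S (τ₁ ω) ω k})) ∩ B)) \ (N ∪ U)).Nonempty := by
      apply nonempty_of_measure_ne_zero (μ := μ)
      rw [measure_diff_null (measure_union_null hN hUnull)]
      exact hcud.ne'
    obtain ⟨⟨hωC, hωB⟩, hωNU⟩ := hωmem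
    rw [Set.mem_union, not_or] at hωNU
    have hterm : ∀ k : Fin d, ψ ω k * (S (min (τ' ω) T) ω k - S (min (τ ω) T) ω k) ≤ 0 ∧
        ((s k : ℕ) ≠ 1 → k ∈ I →
          ψ ω k * (S (min (τ' ω) T) ω k - S (min (τ ω) T) ω k) < 0) := by
      intro k
      have hpt := hA'pat ω hωB.1 k
      by_cases hkI : k ∈ I
      · have hωk := Set.mem_iInter₂.mp hωC k hkI
        by_cases h0 : (s k : ℕ) = 0
        · have hα' : α k = true := by simp only [hα, h0, decide_true]
          rw [if_pos hα'] at hωk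
          have hlt : S (min (τ ω) T) ω k < S (min (τ' ω) T) ω k := by
            have h5 := hωk
            simp only [Set.mem_setOf_eq] at h5
            rwa [(hBτ ω hωB).1, (hBτ ω hωB).2] at h5
          have hψneg : ψ ω k < 0 := by simpa [pt, h0] using hpt
          exact ⟨(mul_neg_of_neg_of_pos hψneg (by linarith)).le,
            fun _ _ => mul_neg_of_neg_of_pos hψneg (by linarith)⟩
        · by_cases h1 : (s k : ℕ) = 1
          · have hψ0 : ψ ω k = 0 := by simpa [pt, h0, h1] using hpt
            refine ⟨by rw [hψ0, zero_mul], fun hcon _ => absurd h1 hcon⟩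
          · have hα' : α k = false := by simp only [hα, h0, decide_false]
            rw [hα'] at hωk
            simp only [Bool.false_eq_true, if_false] at hωk
            have hlt : S (min (τ' ω) T) ω k < S (min (τ ω) T) ω k := by
              have h5 := hωk
              simp only [Set.mem_setOf_eq] at h5
              rwa [(hBτ ω hωB).1, (hBτ ω hωB).2] at h5
            have hψpos : 0 < ψ ω k := by simpa [pt, h0, h1] using hpt
            exact ⟨(mul_neg_of_pos_of_neg hψpos (by linarith)).le,
              fun _ _ => mul_neg_of_pos_of_neg hψpos (by linarith)⟩
      · have hflat : S (min (τ ω) T) ω k = S (min (τ' ω) T) ω k := by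
          by_contra hne
          apply hωNU.2
          rw [hU]
          refine Set.mem_iUnion.mpr ⟨k, ?_⟩
          rw [if_neg hkI]
          refine ⟨?_, hωB⟩
          simp only [Set.mem_setOf_eq]
          rw [(hBτ ω hωB).1, (hBτ ω hωB).2]
          exact hne
        refine ⟨by rw [hflat, sub_self, mul_zero], fun _ hkI' => absurd hkI' hkI⟩
    have hexp : ⟪ψ ω, S (min (τ' ω) T) ω - S (min (τ ω) T) ω⟫
        = ∑ k, ψ ω k * (S (min (τ' ω) T) ω k - S (min (τ ω) T) ω k) := by
      rw [inner_expand]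
      exact Finset.sum_congr rfl fun k _ => by simp
    refine ⟨ω, hωB.1, hωNU.1, ?_, ?_⟩
    · rw [hexp]
      exact Finset.sum_nonpos fun k _ => (hterm k).1
    · intro k0 hk0
      have hsub : {ω' | ψ ω' k0 ≠ 0 ∧
          S (min (τ ω') T) ω' k0 ≠ S (min (τ' ω') T) ω' k0} ∩ B
          ⊆ {ω | S (τ₁ ω) ω k0 ≠ S (τ₂ ω) ω k0} ∩ B := by
        rw [hIeq k0]
        exact fun x hx => ⟨hx.1.2, hx.2⟩
      have hk0I : k0 ∈ I := by
        rw [hI, Set.mem_setOf_eq]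
        exact lt_of_lt_of_le hk0 (measure_mono hsub)
      obtain ⟨ω', hω'⟩ := nonempty_of_measure_ne_zero hk0.ne'
      have hs1 : (s k0 : ℕ) ≠ 1 := by
        intro h1
        have hpt' := hA'pat ω' hω'.2.1 k0
        have hψ' := hω'.1.1
        apply hψ'
        simpa [pt, h1] using hpt'
      have hstrict := (hterm k0).2 hs1 hk0I
      rw [hexp]
      have hsumlt : ∑ k, ψ ω k * (S (min (τ' ω) T) ω k - S (min (τ ω) T) ω k)
          < ∑ _k : Fin d, (0:ℝ) :=
        Finset.sum_lt_sum (fun k _ => (hterm k).1) ⟨k0, Finset.mem_univ _, hstrict⟩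
      simpa using hsumlt
  · -- no coordinate moves on B
    set U := ⋃ k : Fin d, ({ω | S (τ₁ ω) ω k ≠ S (τ₂ ω) ω k} ∩ B) with hU
    have hUnull : μ U = 0 := by
      refine measure_iUnion_null fun k => ?_
      by_contra hk
      exact hIne ⟨k, pos_iff_ne_zero.mpr hk⟩
    obtain ⟨ω, hωmem⟩ : (B \ (N ∪ U)).Nonempty := by
      apply nonempty_of_measure_ne_zero (μ := μ)
      rw [measure_diff_null (measure_union_null hN hUnull)]
      exact hBpos.ne'
    obtain ⟨hωB, hωNU⟩ := hωmem
    rw [Set.mem_union, not_or] at hωNU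
    have hflat : ∀ k : Fin d, S (min (τ ω) T) ω k = S (min (τ' ω) T) ω k := by
      intro k
      by_contra hne
      apply hωNU.2
      rw [hU]
      refine Set.mem_iUnion.mpr ⟨k, ?_, hωB⟩
      simp only [Set.mem_setOf_eq]
      rw [(hBτ ω hωB).1, (hBτ ω hωB).2]
      exact hne
    have hzero : S (min (τ' ω) T) ω - S (min (τ ω) T) ω = 0 := by
      ext k
      simp [hflat k]
    refine ⟨ω, hωB.1, hωNU.1, ?_, ?_⟩
    · rw [hzero, inner_zero_right]
    · intro k0 hk0
      exfalso
      have hsub : {ω' | ψ ω' k0 ≠ 0 ∧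
          S (min (τ ω') T) ω' k0 ≠ S (min (τ' ω') T) ω' k0} ∩ B
          ⊆ {ω | S (τ₁ ω) ω k0 ≠ S (τ₂ ω) ω k0} ∩ B := by
        rw [hIeq k0]
        exact fun x hx => ⟨hx.1.2, hx.2⟩
      have hnull : μ ({ω | S (τ₁ ω) ω k0 ≠ S (τ₂ ω) ω k0} ∩ B) = 0 := by
        by_contra hk
        exact hIne ⟨k0, pos_iff_ne_zero.mpr hk⟩
      exact hk0.ne' (measure_mono_null hsub hnull)

private lemma aux_no_arb {d : ℕ} {mΩ : MeasurableSpace Ω} (μ : Measure Ω) [IsProbabilityMeasure μ]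
    (T : ℝ) (hT : 0 < T) (F : Filtration ℝ mΩ) (S : ℝ → Ω → EuclideanSpace ℝ (Fin d))
    (hProg : ProgMeasurable F S) (hCUD : JointCUD μ T F S) (h : ℝ) (hh : 0 < h) :
    ∀ n : ℕ, ∀ (τ : ℕ → Ω → ℝ) (φ : ℕ → Ω → EuclideanSpace ℝ (Fin d))
      (hst : ∀ j, IsStoppingTime F (fun ω => (τ j ω : WithTop ℝ))),
      (∀ j ω, 0 ≤ τ j ω) → (∀ j, j < n → ∀ ω, τ j ω + h ≤ τ (j+1) ω) →
      (∀ j, j < n → Measurable[(hst j).measurableSpace] (φ j)) →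
      (∀ᵐ ω ∂μ, 0 ≤ vproc S T τ φ n ω) → μ {ω | 0 < vproc S T τ φ n ω} = 0 := by
  intro n
  induction n using Nat.strong_induction_on with
  | _ n IH =>
  intro τ φ hst hτ0 hgap hφ hae
  classical
  by_contra hpos0
  have hpos : 0 < μ {ω | 0 < vproc S T τ φ n ω} := pos_iff_ne_zero.mpr hpos0
  have hmono : ∀ j k, j ≤ k → k ≤ n → ∀ ω, τ j ω ≤ τ k ω := by
    intro j k hjk hkn ω
    induction k, hjk using Nat.le_induction with
    | base => exact le_rfl
    | succ k hk ihk =>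
      have h1 := ihk (by omega)
      have h2 := hgap k (by omega) ω
      linarith
  have heval : ∀ k : Fin d, Measurable fun x : EuclideanSpace ℝ (Fin d) => x k :=
    fun k => (measurable_pi_apply k).comp (WithLp.measurable_ofLp 2 (Fin d → ℝ))
  have hSmeas : ∀ j, Measurable[((hst j).min_const T).measurableSpace]
      (fun ω => S (min (τ j ω) T) ω) :=
    fun j => by
      have := measurable_stoppedValue hProg ((hst j).min_const T)
      convert this using 1
      funext ω
      show _ = S (min ((τ j ω : ℝ) : WithTop ℝ) ((T : ℝ) : WithTop ℝ)).untopA ω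
      rw [← WithTop.coe_min]
      rfl
  have hSmeas' : ∀ j k, j ≤ k → k ≤ n → Measurable[(hst k).measurableSpace]
      (fun ω => S (min (τ j ω) T) ω) := by
    intro j k hjk hkn
    refine (hSmeas j).mono (IsStoppingTime.measurableSpace_mono _ (hst k) fun ω => ?_) le_rfl
    exact (min_le_left _ _).trans (WithTop.coe_le_coe.mpr (hmono j k hjk hkn ω))
  have hφ' : ∀ j k, j < k → k ≤ n → Measurable[(hst k).measurableSpace] (φ j) := by
    intro j k hjk hkn
    exact (hφ j (by omega)).mono (IsStoppingTime.measurableSpace_mono _ (hst k)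
      fun ω => WithTop.coe_le_coe.mpr (hmono j k hjk.le hkn ω)) le_rfl
  have hVmeas : ∀ m', m' ≤ n → Measurable[(hst m').measurableSpace] (vproc S T τ φ m') := by
    intro m' hmn
    unfold vproc incr
    apply Finset.measurable_sum
    intro j hj
    rw [Finset.mem_range] at hj
    exact Measurable.inner (hφ' j m' hj hmn)
      ((hSmeas' (j+1) m' hj hmn).sub (hSmeas' j m' (by omega) hmn))
  by_cases hex : ∀ j, j < n → μ {ω | incr S T τ φ j ω ≠ 0} = 0
  · -- no increment ever moves: value is a.s. zero
    have hsub : {ω | 0 < vproc S T τ φ n ω}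
        ⊆ ⋃ j ∈ Finset.range n, {ω | incr S T τ φ j ω ≠ 0} := by
      intro ω hω
      by_contra hcon
      simp only [Set.mem_iUnion, Set.mem_setOf_eq, not_exists, not_and, not_not] at hcon
      have hv0 : vproc S T τ φ n ω = 0 :=
        Finset.sum_eq_zero fun j hj => hcon j hj
      rw [Set.mem_setOf_eq, hv0] at hω
      exact lt_irrefl 0 hω
    have hnull : μ (⋃ j ∈ Finset.range n, {ω | incr S T τ φ j ω ≠ 0}) = 0 := by
      refine measure_biUnion_null_iff (Finset.range n).countable_toSet |>.mpr ?_
      intro j hj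
      exact hex j (Finset.mem_range.mp hj)
    exact hpos0 (measure_mono_null hsub hnull)
  · push_neg at hex
    obtain ⟨j0, hj0n, hj0⟩ := hex
    set P : ℕ → Prop := fun j => j < n ∧ μ {ω | incr S T τ φ j ω ≠ 0} ≠ 0 with hP
    have hPj : P (Nat.findGreatest P n) :=
      Nat.findGreatest_spec (m := j0) (by omega) ⟨hj0n, hj0⟩
    set J := Nat.findGreatest P n with hJ
    obtain ⟨hJn, hJpos⟩ := hPj
    have hJmax : ∀ j, J < j → j < n → μ {ω | incr S T τ φ j ω ≠ 0} = 0 := by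
      intro j hJj hjn
      by_contra hne
      exact Nat.findGreatest_is_greatest hJj (by omega) ⟨hjn, hne⟩
    have hVtail : ∀ᵐ ω ∂μ, vproc S T τ φ n ω = vproc S T τ φ (J+1) ω := by
      have hallae : ∀ᵐ ω ∂μ, ∀ j, J < j → j < n → incr S T τ φ j ω = 0 := by
        rw [MeasureTheory.ae_all_iff]
        intro j
        by_cases hcond : J < j ∧ j < n
        · have hj0' := hJmax j hcond.1 hcond.2
          rw [ae_iff]
          refine measure_mono_null ?_ hj0'
          intro ω hω
          simp only [Set.mem_setOf_eq] at hω ⊢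
          intro h0
          exact hω fun _ _ => h0
        · refine Filter.Eventually.of_forall fun ω h1 h2 => ?_
          exact absurd ⟨h1, h2⟩ hcond
      filter_upwards [hallae] with ω hω
      unfold vproc
      rw [Finset.range_eq_Ico, ← Finset.sum_Ico_consecutive _ (Nat.zero_le (J+1))
        (by omega : J+1 ≤ n)]
      have hzero : ∑ j ∈ Finset.Ico (J+1) n, incr S T τ φ j ω = 0 :=
        Finset.sum_eq_zero fun j hj => by
          have hj' := Finset.mem_Ico.mp hj
          exact hω j (by omega) hj'.2
      rw [hzero, add_zero, ← Finset.range_eq_Ico]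
    set Pat : (Fin d → Fin 3) → Set Ω := fun s => {ω | ∀ k, pt (s k) (φ J ω k)} with hPat
    have hPatMeas : ∀ s, MeasurableSet[(hst J).measurableSpace] (Pat s) := by
      intro s
      have hrw : Pat s = ⋂ k, (fun ω => φ J ω k) ⁻¹' {x | pt (s k) x} := by
        ext ω
        simp [hPat, Set.mem_iInter]
      rw [hrw]
      exact MeasurableSet.iInter fun k => ((heval k).comp (hφ J hJn)) (pt_meas (s k))
    have hPatCover : ∀ ω, ∃ s, ω ∈ Pat s := by
      intro ω
      choose s hs using fun k : Fin d => pt_total (φ J ω k)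
      exact ⟨s, hs⟩
    have hcover : ∀ G : Set Ω, G ⊆ {ω | τ J ω < T} → 0 < μ G →
        ∃ (s : Fin d → Fin 3) (m : ℕ),
          0 < μ (G ∩ (Pat s ∩ {ω | τ J ω ≤ T - 1/(m+1 : ℝ)})) := by
      intro G hGsub hGpos
      by_contra hcon
      push_neg at hcon
      have hsub : G ⊆ ⋃ p : (Fin d → Fin 3) × ℕ,
          (G ∩ (Pat p.1 ∩ {ω | τ J ω ≤ T - 1/(p.2+1 : ℝ)})) := by
        intro ω hω
        obtain ⟨s, hs⟩ := hPatCover ω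
        obtain ⟨m, hm⟩ := exists_nat_one_div_lt (K := ℝ) (sub_pos.mpr (hGsub hω))
        refine Set.mem_iUnion.mpr ⟨(s, m), hω, hs, ?_⟩
        simp only [Set.mem_setOf_eq]
        have hτT : τ J ω < T := hGsub hω
        linarith
      have hG0 : μ G = 0 := by
        refine measure_mono_null hsub (measure_iUnion_null fun p => ?_)
        exact le_antisymm (hcon p.1 p.2) zero_le
      exact hGpos.ne' hG0
    have hsucc : ∀ ω, vproc S T τ φ (J+1) ω = vproc S T τ φ J ω + incr S T τ φ J ω :=
      fun ω => Finset.sum_range_succ _ _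
    -- Step A : the value before the last active period is a.s. nonnegative
    have hW : ∀ᵐ ω ∂μ, 0 ≤ vproc S T τ φ J ω := by
      by_contra hcon
      rw [ae_iff] at hcon
      have hApos : 0 < μ {ω | vproc S T τ φ J ω < 0} := by
        have hsetrw : {ω | ¬ 0 ≤ vproc S T τ φ J ω} = {ω | vproc S T τ φ J ω < 0} := by
          ext ω; simp [not_le]
        rw [hsetrw] at hcon
        exact pos_iff_ne_zero.mpr hcon
      set A := {ω | vproc S T τ φ J ω < 0} with hA
      set N := {ω | ¬ 0 ≤ vproc S T τ φ n ω}
        ∪ {ω | ¬ vproc S T τ φ n ω = vproc S T τ φ (J+1) ω} with hNdef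
      have hNnull : μ N = 0 := measure_union_null (ae_iff.mp hae) (ae_iff.mp hVtail)
      by_cases hsplit : 0 < μ (A ∩ {ω | τ J ω < T})
      · obtain ⟨s, m, hsm⟩ := hcover (A ∩ {ω | τ J ω < T}) (fun ω hω => hω.2) hsplit
        have hsm' : 0 < μ ((A ∩ Pat s) ∩ {ω | τ J ω ≤ T - 1/(m+1 : ℝ)}) := by
          refine lt_of_lt_of_le hsm (measure_mono ?_)
          rintro ω ⟨⟨h1, _⟩, h3, h4⟩
          exact ⟨⟨h1, h3⟩, h4⟩
        have hAmeas : MeasurableSet[(hst J).measurableSpace] (A ∩ Pat s) := by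
          refine MeasurableSet.inter ?_ (hPatMeas s)
          exact (hVmeas J hJn.le) measurableSet_Iio
        obtain ⟨ω, hωA', hωN, hle, _⟩ := key_lemma μ T hT F S hCUD h hh (τ J) (τ (J+1)) (φ J)
          (hst J) (hst (J+1)) (hτ0 J) (hgap J hJn) (A ∩ Pat s) s (m := m) hAmeas
          (fun ω hω => hω.2) hsm' N hNnull
        simp only [hNdef, Set.mem_union, not_or, Set.mem_setOf_eq, not_not] at hωN
        have h1 : vproc S T τ φ J ω < 0 := hωA'.1
        have hle' : incr S T τ φ J ω ≤ 0 := hle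
        have := hsucc ω
        linarith [hωN.1, hωN.2]
      · have hpos2 : 0 < μ (A ∩ {ω | T ≤ τ J ω}) := by
          have hA2 : A ⊆ (A ∩ {ω | τ J ω < T}) ∪ (A ∩ {ω | T ≤ τ J ω}) := by
            intro ω hω
            by_cases hτT : τ J ω < T
            · exact Or.inl ⟨hω, hτT⟩
            · exact Or.inr ⟨hω, not_lt.mp hτT⟩
          by_contra hc2
          have h0 : μ ((A ∩ {ω | τ J ω < T}) ∪ (A ∩ {ω | T ≤ τ J ω})) = 0 :=
            measure_union_null (le_antisymm (not_lt.mp hsplit) zero_le)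
              (le_antisymm (not_lt.mp hc2) zero_le)
          exact hApos.ne' (measure_mono_null hA2 h0)
        obtain ⟨ω, hωmem⟩ : ((A ∩ {ω | T ≤ τ J ω}) \ N).Nonempty := by
          apply nonempty_of_measure_ne_zero (μ := μ)
          rw [measure_diff_null hNnull]
          exact hpos2.ne'
        obtain ⟨⟨hωA, hωT⟩, hωN⟩ := hωmem
        simp only [hNdef, Set.mem_union, not_or, Set.mem_setOf_eq, not_not] at hωN
        have hinc0 : incr S T τ φ J ω = 0 := by
          have h1 : min (τ J ω) T = T := min_eq_right hωT
          have h2 : min (τ (J+1) ω) T = T :=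
            min_eq_right (le_trans hωT (by linarith [hgap J hJn ω, hh]))
          unfold incr
          rw [h1, h2, sub_self, inner_zero_right]
        have hωA' : vproc S T τ φ J ω < 0 := hωA
        have := hsucc ω
        linarith [hωN.1, hωN.2]
    -- Step B : split on whether the value before the last active period can be positive
    by_cases hWpos : 0 < μ {ω | 0 < vproc S T τ φ J ω}
    · have h0 := IH J hJn τ φ hst hτ0 (fun j hj => hgap j (by omega))
        (fun j hj => hφ j (by omega)) hW
      exact hWpos.ne' h0
    · have hW0 : ∀ᵐ ω ∂μ, vproc S T τ φ J ω = 0 := by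
        have h1 : μ {ω | 0 < vproc S T τ φ J ω} = 0 :=
          le_antisymm (not_lt.mp hWpos) zero_le
        have h2 : ∀ᵐ ω ∂μ, ¬ 0 < vproc S T τ φ J ω := by
          rw [ae_iff]
          simpa using h1
        filter_upwards [hW, h2] with ω hω1 hω2
        have := not_lt.mp hω2
        linarith
      have hmoves : 0 < μ {ω | incr S T τ φ J ω ≠ 0} := pos_iff_ne_zero.mpr hJpos
      have hsubT : {ω | incr S T τ φ J ω ≠ 0} ⊆ {ω | τ J ω < T} := by
        intro ω hω
        by_contra hT'
        rw [Set.mem_setOf_eq, not_lt] at hT'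
        apply hω
        have h1 : min (τ J ω) T = T := min_eq_right hT'
        have h2 : min (τ (J+1) ω) T = T :=
          min_eq_right (hT'.trans (by linarith [hgap J hJn ω, hh]))
        unfold incr
        rw [h1, h2, sub_self, inner_zero_right]
      obtain ⟨s, m, hsm⟩ := hcover _ hsubT hmoves
      have hBpos' : 0 < μ (Pat s ∩ {ω | τ J ω ≤ T - 1/(m+1 : ℝ)}) :=
        lt_of_lt_of_le hsm (measure_mono Set.inter_subset_right)
      have hexpand : ∀ ω, incr S T τ φ J ω
          = ∑ k, φ J ω k * (S (min (τ (J+1) ω) T) ω k - S (min (τ J ω) T) ω k) := by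
        intro ω
        unfold incr
        rw [inner_expand]
        exact Finset.sum_congr rfl fun k _ => by simp
      have hk0 : ∃ k0 : Fin d, 0 < μ ({ω' | φ J ω' k0 ≠ 0 ∧
          S (min (τ J ω') T) ω' k0 ≠ S (min (τ (J+1) ω') T) ω' k0}
          ∩ (Pat s ∩ {ω' | τ J ω' ≤ T - 1/(m+1 : ℝ)})) := by
        by_contra hcon
        push_neg at hcon
        have hsub2 : {ω | incr S T τ φ J ω ≠ 0} ∩ (Pat s ∩ {ω | τ J ω ≤ T - 1/(m+1 : ℝ)})
            ⊆ ⋃ k : Fin d, ({ω' | φ J ω' k ≠ 0 ∧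
              S (min (τ J ω') T) ω' k ≠ S (min (τ (J+1) ω') T) ω' k}
              ∩ (Pat s ∩ {ω' | τ J ω' ≤ T - 1/(m+1 : ℝ)})) := by
          rintro ω ⟨hne, hB⟩
          have hterm : ∃ k, φ J ω k * (S (min (τ (J+1) ω) T) ω k
              - S (min (τ J ω) T) ω k) ≠ 0 := by
            by_contra hall
            push_neg at hall
            exact hne ((hexpand ω).trans (Finset.sum_eq_zero fun k _ => hall k))
          obtain ⟨k, hk⟩ := hterm
          rw [mul_ne_zero_iff] at hk
          refine Set.mem_iUnion.mpr ⟨k, ⟨hk.1, ?_⟩, hB⟩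
          intro hEq
          exact hk.2 (by rw [hEq, sub_self])
        have h0 : μ ({ω | incr S T τ φ J ω ≠ 0}
            ∩ (Pat s ∩ {ω | τ J ω ≤ T - 1/(m+1 : ℝ)})) = 0 := by
          refine measure_mono_null hsub2 (measure_iUnion_null fun k => ?_)
          exact le_antisymm (hcon k) zero_le
        exact hsm.ne' h0
      obtain ⟨k0, hk0p⟩ := hk0
      set N := {ω | ¬ 0 ≤ vproc S T τ φ n ω}
        ∪ ({ω | ¬ vproc S T τ φ n ω = vproc S T τ φ (J+1) ω}
          ∪ {ω | ¬ vproc S T τ φ J ω = 0}) with hNdef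
      have hNnull : μ N = 0 := measure_union_null (ae_iff.mp hae)
        (measure_union_null (ae_iff.mp hVtail) (ae_iff.mp hW0))
      obtain ⟨ω, hωA', hωN, _, hstrict⟩ := key_lemma μ T hT F S hCUD h hh (τ J) (τ (J+1)) (φ J)
        (hst J) (hst (J+1)) (hτ0 J) (hgap J hJn) (Pat s) s (m := m) (hPatMeas s)
        (fun ω hω => hω) hBpos' N hNnull
      have hlt := hstrict k0 hk0p
      simp only [hNdef, Set.mem_union, not_or, Set.mem_setOf_eq, not_not] at hωN
      have hlt' : incr S T τ φ J ω < 0 := hlt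
      have := hsucc ω
      linarith [hωN.1, hωN.2.1, hωN.2.2]

/-- the joint CUD condition implies absence of arbitrage in the Cheridito
class (simple strategies with a minimal waiting time h > 0 between rebalancing times). -/
theorem no_arbitrage_in_cheridito_class_of_jointCUD
    {mΩ : MeasurableSpace Ω} (μ : Measure Ω) [IsProbabilityMeasure μ]
    (T : ℝ) (hT : 0 < T) (d : ℕ)
    (F : MeasureTheory.Filtration ℝ mΩ)
    (S : ℝ → Ω → EuclideanSpace ℝ (Fin d))
    (hScadlag_r : ∀ ω t, ContinuousWithinAt (fun s => S s ω) (Set.Ici t) t)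
    (hScadlag_l : ∀ ω t, ∃ L, Filter.Tendsto (fun s => S s ω) (nhdsWithin t (Set.Iio t)) (nhds L))
    (hSadapted : ∀ t : ℝ, Measurable[F t] (S t))
    (hCUD : JointCUD μ T F S) :
    ¬ ∃ (n : ℕ) (τ : Fin (n + 1) → Ω → ℝ) (φ : Fin n → Ω → EuclideanSpace ℝ (Fin d))
        (h : ℝ) (hst : ∀ j, IsStoppingTime F (fun ω => (τ j ω : WithTop ℝ))),
      0 < h ∧ (∀ ω, τ 0 ω = 0) ∧ (∀ (j : Fin (n + 1)) ω, 0 ≤ τ j ω) ∧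
      -- Cheridito class: waiting time at least h between consecutive trading times
      (∀ (j : Fin n) ω, τ j.castSucc ω + h ≤ τ j.succ ω) ∧
      -- the portfolio held on (τ_j, τ_{j+1}] is F_{τ_j}-measurable
      (∀ j : Fin n, Measurable[(hst j.castSucc).measurableSpace] (φ j)) ∧
      -- arbitrage: V_T(Φ;0) ≥ 0 a.s. and V_T(Φ;0) > 0 with positive probability
      (∀ᵐ ω ∂μ, 0 ≤ ∑ j : Fin n,
        ⟪φ j ω, S (min T (τ j.succ ω)) ω - S (min T (τ j.castSucc ω)) ω⟫) ∧
      0 < μ {ω | 0 < ∑ j : Fin n,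
        ⟪φ j ω, S (min T (τ j.succ ω)) ω - S (min T (τ j.castSucc ω)) ω⟫} := by
  rintro ⟨n, τ, φ, h, hst, hh, hτzero, hτpos, hgap, hφ, hae, hpos⟩
  classical
  set τN : ℕ → Ω → ℝ := fun j => τ ⟨min j n, Nat.lt_succ_of_le (min_le_right j n)⟩ with hτN
  set φN : ℕ → Ω → EuclideanSpace ℝ (Fin d) :=
    fun j => if hj : j < n then φ ⟨j, hj⟩ else 0 with hφN
  have hfin : ∀ (j : ℕ) (hj : j < n),
      (⟨min j n, Nat.lt_succ_of_le (min_le_right j n)⟩ : Fin (n+1)) = (⟨j, hj⟩ : Fin n).castSucc :=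
    fun j hj => by ext; simp [Nat.min_eq_left hj.le]
  have hfin' : ∀ (j : ℕ) (hj : j < n),
      (⟨min (j+1) n, Nat.lt_succ_of_le (min_le_right (j+1) n)⟩ : Fin (n+1))
        = (⟨j, hj⟩ : Fin n).succ :=
    fun j hj => by ext; simp [Nat.min_eq_left (Nat.succ_le_of_lt hj)]
  have hstN : ∀ j, IsStoppingTime F (fun ω => (τN j ω : WithTop ℝ)) := fun j => hst _
  have hincr : ∀ (j : Fin n) (ω : Ω), incr S T τN φN (j : ℕ) ω
      = ⟪φ j ω, S (min T (τ j.succ ω)) ω - S (min T (τ j.castSucc ω)) ω⟫ := by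
    intro j ω
    have h1 : τN (j : ℕ) = τ j.castSucc := by
      rw [hτN]
      dsimp only
      rw [hfin (j : ℕ) j.isLt, Fin.eta]
    have h2 : τN ((j : ℕ) + 1) = τ j.succ := by
      rw [hτN]
      dsimp only
      rw [hfin' (j : ℕ) j.isLt, Fin.eta]
    have h3 : φN (j : ℕ) = φ j := by
      rw [hφN]
      dsimp only
      rw [dif_pos j.isLt, Fin.eta]
    unfold incr
    rw [h1, h2, h3, min_comm _ T, min_comm _ T]
  have hsum : ∀ ω, vproc S T τN φN n ω = ∑ j : Fin n,
      ⟪φ j ω, S (min T (τ j.succ ω)) ω - S (min T (τ j.castSucc ω)) ω⟫ := by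
    intro ω
    rw [vproc, ← Fin.sum_univ_eq_sum_range (fun j => incr S T τN φN j ω) n]
    exact Finset.sum_congr rfl fun j _ => hincr j ω
  have hτ0N : ∀ j ω, 0 ≤ τN j ω := fun j ω => hτpos _ ω
  have hgapN : ∀ j, j < n → ∀ ω, τN j ω + h ≤ τN (j+1) ω := by
    intro j hj ω
    have hg := hgap ⟨j, hj⟩ ω
    rw [hτN]
    dsimp only
    rw [hfin j hj, hfin' j hj]
    exact hg
  have hφN' : ∀ j, j < n → Measurable[(hstN j).measurableSpace] (φN j) := by
    intro j hj
    have h3 : φN j = φ ⟨j, hj⟩ := by rw [hφN]; dsimp only; rw [dif_pos hj]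
    rw [h3]
    have h2 : τN j = τ (⟨j, hj⟩ : Fin n).castSucc := by
      rw [hτN]; dsimp only; rw [hfin j hj]
    have htrans : ∀ (g : Ω → ℝ) (hg : IsStoppingTime F (fun ω => (g ω : WithTop ℝ))), τN j = g →
        Measurable[hg.measurableSpace] (φ ⟨j, hj⟩) →
        Measurable[(hstN j).measurableSpace] (φ ⟨j, hj⟩) := by
      rintro g hg rfl hmeas
      exact hmeas
    exact htrans _ (hst _) h2 (hφ ⟨j, hj⟩)
  have haeN : ∀ᵐ ω ∂μ, 0 ≤ vproc S T τN φN n ω := by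
    filter_upwards [hae] with ω hω
    rw [hsum ω]
    exact hω
  have hzero := aux_no_arb μ T hT F S (progMeas_rc F S hSadapted hScadlag_r) hCUD h hh n
    τN φN hstN hτ0N hgapN hφN' haeN
  apply hpos.ne'
  rw [← hzero]
  congr 1
  ext ω
  simp only [Set.mem_setOf_eq, hsum ω]
end
end
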